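/- arXiv:1410.4072 — 3 statements merged into one kernel-verified Lean document; each statement's English description precedes it below -/
import Mathlib

section
/- Let b(x) = λx^α + γ with λ > 0, 0 < α < 1 and γ ≥ 0. Then the map β ↦ β·C(β) is strictly increasing on (0, ∞). -/
open MeasureTheory Real Filter Set

/-- `C(β) = ∫₀¹ (1-x)⁻¹ exp(-∫₀ˣ b(aβy)/(1-y) dy) dx`. -/
noncomputable def Cfun (a : ℝ) (b : ℝ → ℝ) (β : ℝ) : ℝ :=
  ∫ x in (0:ℝ)..1, (1 - x)⁻¹ * Real.exp (-∫ y in (0:ℝ)..x, b (a * β * y) / (1 - y))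

namespace BetaCAux

/-- The integrand `t^α / (1-t)`. -/
noncomputable def fa (α t : ℝ) : ℝ := t ^ α / (1 - t)

/-- `F α x = ∫₀ˣ t^α/(1-t) dt`. -/
noncomputable def F (α : ℝ) (x : ℝ) : ℝ := ∫ t in (0:ℝ)..x, fa α t

variable {α : ℝ}

lemma fa_continuousAt (hα : 0 < α) {t : ℝ} (ht : t < 1) : ContinuousAt (fa α) t := by
  have h1 : ContinuousAt (fun t : ℝ => t ^ α) t :=
    Real.continuousAt_rpow_const t α (Or.inr hα.le)
  exact h1.div (continuousAt_const.sub continuousAt_id) (by intro h; linarith [sub_eq_zero.mp h])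

lemma fa_continuousOn (hα : 0 < α) : ContinuousOn (fa α) (Iio 1) := fun t ht =>
  (fa_continuousAt hα ht).continuousWithinAt

lemma mem_uIcc_lt_one {u v t : ℝ} (hu : u < 1) (hv : v < 1) (ht : t ∈ Set.uIcc u v) :
    t < 1 := lt_of_le_of_lt ht.2 (max_lt hu hv)

lemma fa_intervalIntegrable (hα : 0 < α) {u v : ℝ} (hu : u < 1) (hv : v < 1) :
    IntervalIntegrable (fa α) volume u v := by
  apply ContinuousOn.intervalIntegrable
  exact (fa_continuousOn hα).mono (fun t ht => mem_uIcc_lt_one hu hv ht)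

lemma fa_nonneg (hα : 0 < α) {t : ℝ} (h0 : 0 ≤ t) (h1 : t < 1) : 0 ≤ fa α t :=
  div_nonneg (Real.rpow_nonneg h0 α) (by linarith)

lemma fa_pos (hα : 0 < α) {t : ℝ} (h0 : 0 < t) (h1 : t < 1) : 0 < fa α t :=
  div_pos (Real.rpow_pos_of_pos h0 α) (by linarith)

lemma F_hasDerivAt (hα : 0 < α) {x : ℝ} (hx : x < 1) : HasDerivAt (F α) (fa α x) x := by
  apply intervalIntegral.integral_hasDerivAt_right
    (fa_intervalIntegrable hα one_pos hx)
  · exact ContinuousAt.stronglyMeasurableAtFilter isOpen_Iio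
      (fun t (ht : t < 1) => fa_continuousAt hα ht) x hx
  · exact fa_continuousAt hα hx

lemma F_zero : F α 0 = 0 := intervalIntegral.integral_same

lemma F_continuousOn (hα : 0 < α) : ContinuousOn (F α) (Iio 1) := fun x hx =>
  ((F_hasDerivAt hα hx).continuousAt).continuousWithinAt

lemma F_strictMonoOn (hα : 0 < α) : StrictMonoOn (F α) (Ico 0 1) := by
  apply strictMonoOn_of_deriv_pos (convex_Ico 0 1)
  · exact (F_continuousOn hα).mono (fun x hx => hx.2)
  · intro x hx
    rw [interior_Ico] at hx
    rw [(F_hasDerivAt hα hx.2).deriv]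
    exact fa_pos hα hx.1 hx.2

lemma F_nonneg (hα : 0 < α) {x : ℝ} (h0 : 0 ≤ x) (h1 : x < 1) : 0 ≤ F α x := by
  apply intervalIntegral.integral_nonneg h0
  intro t ht
  exact fa_nonneg hα ht.1 (lt_of_le_of_lt ht.2 h1)

lemma integral_one_sub_inv {u v : ℝ} (hu : u < 1) (hv : v < 1) :
    ∫ t in u..v, (1 - t)⁻¹ = Real.log (1 - u) - Real.log (1 - v) := by
  have key : ∀ t ∈ Set.uIcc u v, HasDerivAt (fun s => -Real.log (1 - s)) (1 - t)⁻¹ t := by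
    intro t ht
    have ht1 : t < 1 := mem_uIcc_lt_one hu hv ht
    have h1 : HasDerivAt (fun s : ℝ => 1 - s) (-1) t := by
      simpa using (hasDerivAt_id t).const_sub 1
    have h2 := (Real.hasDerivAt_log (by linarith : (1:ℝ) - t ≠ 0)).comp t h1
    have h3 := h2.neg
    have h4 : HasDerivAt (fun s => -Real.log (1 - s)) (-((1 - t)⁻¹ * -1)) t := h3
    convert h4 using 1
    ring
  have hint : IntervalIntegrable (fun t : ℝ => (1 - t)⁻¹) volume u v := by
    apply ContinuousOn.intervalIntegrable
    intro t ht
    have ht1 : t < 1 := mem_uIcc_lt_one hu hv ht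
    exact ((continuousAt_const.sub continuousAt_id).continuousWithinAt.inv₀
      (by intro h; simp at h; linarith [sub_eq_zero.mp h]))
  rw [intervalIntegral.integral_eq_sub_of_hasDerivAt key hint]
  ring

lemma F_large (hα : 0 < α) {u : ℝ} (hu : 0 < u) : ∃ x ∈ Ioo (0:ℝ) 1, u < F α x := by
  set K : ℝ := (2:ℝ)⁻¹ ^ α with hK
  have hKpos : 0 < K := Real.rpow_pos_of_pos (by norm_num) α
  set x : ℝ := 1 - Real.exp (-(u / K)) / 4 with hxdef
  have hexp1 : Real.exp (-(u / K)) ≤ 1 := by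
    apply Real.exp_le_one_iff.mpr
    simp only [neg_nonpos]
    positivity
  have hexp0 : 0 < Real.exp (-(u / K)) := Real.exp_pos _
  have hx1 : x < 1 := by rw [hxdef]; linarith
  have hxhalf : (2:ℝ)⁻¹ ≤ x := by rw [hxdef]; linarith
  have hx0 : 0 < x := by rw [hxdef]; linarith
  refine ⟨x, ⟨hx0, hx1⟩, ?_⟩
  have hsplit : F α x = F α 2⁻¹ + ∫ t in (2⁻¹:ℝ)..x, fa α t := by
    rw [F, F]
    rw [intervalIntegral.integral_add_adjacent_intervals
      (fa_intervalIntegrable hα one_pos (by norm_num))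
      (fa_intervalIntegrable hα (by norm_num) hx1)]
  have hmono : ∫ t in (2⁻¹:ℝ)..x, K * (1 - t)⁻¹ ≤ ∫ t in (2⁻¹:ℝ)..x, fa α t := by
    apply intervalIntegral.integral_mono_on hxhalf
    · apply ContinuousOn.intervalIntegrable
      intro t ht
      have ht1 : t < 1 := mem_uIcc_lt_one (by norm_num) hx1 ht
      exact (continuousAt_const.mul ((continuousAt_const.sub continuousAt_id).inv₀
        (by intro h; simp at h; linarith [sub_eq_zero.mp h]))).continuousWithinAt
    · exact fa_intervalIntegrable hα (by norm_num) hx1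
    · intro t ht
      have ht0 : (2⁻¹:ℝ) ≤ t := ht.1
      have ht1 : t < 1 := lt_of_le_of_lt ht.2 hx1
      have h1 : K ≤ t ^ α := Real.rpow_le_rpow (by norm_num) ht0 hα.le
      have h2 : (0:ℝ) < (1 - t)⁻¹ := by
        apply inv_pos.mpr; linarith
      rw [fa, div_eq_mul_inv]
      exact mul_le_mul_of_nonneg_right h1 h2.le
  have hlog : ∫ t in (2⁻¹:ℝ)..x, (1 - t)⁻¹ =
      Real.log (1 - 2⁻¹) - Real.log (1 - x) := integral_one_sub_inv (by norm_num) hx1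
  have h1x : 1 - x = Real.exp (-(u / K)) / 4 := by rw [hxdef]; ring
  have hlogval : Real.log (1 - 2⁻¹) - Real.log (1 - x) = u / K + Real.log 2 := by
    rw [h1x, Real.log_div (Real.exp_ne_zero _) (by norm_num), Real.log_exp]
    have : (1:ℝ) - 2⁻¹ = 2⁻¹ := by norm_num
    rw [this, Real.log_inv]
    have h4 : Real.log 4 = 2 * Real.log 2 := by
      have : (4:ℝ) = 2 ^ (2:ℕ) := by norm_num
      rw [this, Real.log_pow]; push_cast; ring
    rw [h4]; ring
  have hconst : ∫ t in (2⁻¹:ℝ)..x, K * (1 - t)⁻¹ = K * (u / K + Real.log 2) := by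
    rw [intervalIntegral.integral_const_mul, hlog, hlogval]
  have hF0 : 0 ≤ F α 2⁻¹ := F_nonneg hα (by norm_num) (by norm_num)
  have hlog2 : 0 < Real.log 2 := Real.log_pos (by norm_num)
  have : K * (u / K + Real.log 2) = u + K * Real.log 2 := by
    field_simp
  nlinarith [mul_pos hKpos hlog2]

lemma F_image (hα : 0 < α) : F α '' (Ioo 0 1) = Ioi (0:ℝ) := by
  apply Set.Subset.antisymm
  · rintro _ ⟨x, hx, rfl⟩
    have := F_strictMonoOn hα (by constructor <;> norm_num : (0:ℝ) ∈ Ico (0:ℝ) 1)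
      ⟨hx.1.le, hx.2⟩ hx.1
    rw [F_zero] at this
    exact this
  · intro u hu
    obtain ⟨x₁, hx₁, hFx₁⟩ := F_large hα hu
    have hcont : ContinuousOn (F α) (Icc 0 x₁) :=
      (F_continuousOn hα).mono (fun t ht => lt_of_le_of_lt ht.2 hx₁.2)
    have := intermediate_value_Ioo hx₁.1.le hcont
    have hmem : u ∈ Ioo (F α 0) (F α x₁) := by
      rw [F_zero]; exact ⟨hu, hFx₁⟩
    obtain ⟨x, hx, hFx⟩ := this hmem
    exact ⟨x, ⟨hx.1, lt_trans hx.2 hx₁.2⟩, hFx⟩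

/-- Inverse of `F α` on `(0,1)`, extended by `0`. -/
noncomputable def X (α : ℝ) (u : ℝ) : ℝ :=
  if 0 < u then Function.invFunOn (F α) (Ioo 0 1) u else 0

lemma F_injOn (hα : 0 < α) : Set.InjOn (F α) (Ioo 0 1) :=
  ((F_strictMonoOn hα).mono (fun x hx => ⟨hx.1.le, hx.2⟩)).injOn

lemma X_mem (hα : 0 < α) {u : ℝ} (hu : 0 < u) : X α u ∈ Ioo (0:ℝ) 1 := by
  rw [X, if_pos hu]
  apply Function.invFunOn_mem
  have : u ∈ F α '' (Ioo 0 1) := by rw [F_image hα]; exact hu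
  obtain ⟨x, hx, hFx⟩ := this
  exact ⟨x, hx, hFx⟩

lemma F_X (hα : 0 < α) {u : ℝ} (hu : 0 < u) : F α (X α u) = u := by
  rw [X, if_pos hu]
  apply Function.invFunOn_eq
  have : u ∈ F α '' (Ioo 0 1) := by rw [F_image hα]; exact hu
  obtain ⟨x, hx, hFx⟩ := this
  exact ⟨x, hx, hFx⟩

lemma X_F (hα : 0 < α) {x : ℝ} (hx : x ∈ Ioo (0:ℝ) 1) : X α (F α x) = x := by
  have hpos : 0 < F α x := by
    have := F_strictMonoOn hα (by constructor <;> norm_num : (0:ℝ) ∈ Ico (0:ℝ) 1)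
      ⟨hx.1.le, hx.2⟩ hx.1
    rwa [F_zero] at this
  rw [X, if_pos hpos]
  exact (F_injOn hα).leftInvOn_invFunOn hx

lemma X_monotone (hα : 0 < α) : Monotone (X α) := by
  intro u v huv
  by_cases hu : 0 < u
  · have hv : 0 < v := lt_of_lt_of_le hu huv
    by_contra hlt
    push_neg at hlt
    have h1 := F_strictMonoOn hα
      ⟨(X_mem hα hv).1.le, (X_mem hα hv).2⟩ ⟨(X_mem hα hu).1.le, (X_mem hα hu).2⟩ hlt
    rw [F_X hα hu, F_X hα hv] at h1
    linarith
  · rw [X, if_neg hu]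
    by_cases hv : 0 < v
    · exact (X_mem hα hv).1.le
    · rw [X, if_neg hv]

/-- `Psi α γ u = (1 - X u)^γ / (X u)^α`. -/
noncomputable def Psi (α γ : ℝ) (u : ℝ) : ℝ := (1 - X α u) ^ γ / (X α u) ^ α

variable {γ : ℝ}

lemma Psi_pos (hα : 0 < α) (hγ : 0 ≤ γ) {u : ℝ} (hu : 0 < u) : 0 < Psi α γ u := by
  obtain ⟨h1, h2⟩ := X_mem hα hu
  exact div_pos (Real.rpow_pos_of_pos (by linarith) γ) (Real.rpow_pos_of_pos h1 α)

lemma Psi_measurable (hα : 0 < α) (hγ : 0 ≤ γ) : Measurable (Psi α γ) := by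
  have h1 : Measurable (X α) := (X_monotone hα).measurable
  have h2 : Measurable (fun x : ℝ => (1 - x) ^ γ / x ^ α) := by
    apply Measurable.div
    · exact ((Real.continuous_rpow_const hγ).comp
        (continuous_const.sub continuous_id)).measurable
    · exact (Real.continuous_rpow_const hα.le).measurable
  exact h2.comp h1

lemma Psi_antitoneOn (hα : 0 < α) (hγ : 0 ≤ γ) : AntitoneOn (Psi α γ) (Ioi 0) := by
  intro u hu v hv huv
  have hXu := X_mem hα hu
  have hXv := X_mem hα hv
  have hX : X α u ≤ X α v := X_monotone hα huv
  rw [Psi, Psi]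
  apply div_le_div₀ (Real.rpow_nonneg (by linarith [hXu.2]) γ)
  · exact Real.rpow_le_rpow (by linarith [hXv.2]) (by linarith) hγ
  · exact Real.rpow_pos_of_pos hXu.1 α
  · exact Real.rpow_le_rpow hXu.1.le hX hα.le

/-- Upper bound for `u`: `u ≤ x^(1+α)/((1+α)(1-x))` where `x = X u`. -/
lemma F_le (hα : 0 < α) {x : ℝ} (h0 : 0 ≤ x) (h1 : x < 1) :
    F α x * ((1 + α) * (1 - x)) ≤ x ^ (1 + α) := by
  have key : F α x ≤ x ^ (1 + α) / ((1 + α) * (1 - x)) := by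
    have hmono : ∫ t in (0:ℝ)..x, fa α t ≤ ∫ t in (0:ℝ)..x, t ^ α / (1 - x) := by
      apply intervalIntegral.integral_mono_on h0 (fa_intervalIntegrable hα one_pos h1)
      · apply ContinuousOn.intervalIntegrable
        apply ContinuousOn.div_const
        intro t ht
        exact (Real.continuousAt_rpow_const t α (Or.inr hα.le)).continuousWithinAt
      · intro t ht
        rw [fa]
        apply div_le_div_of_nonneg_left (Real.rpow_nonneg ht.1 α) (by linarith)
        · linarith [ht.2]
    have hval : ∫ t in (0:ℝ)..x, t ^ α / (1 - x) = x ^ (1 + α) / ((1 + α) * (1 - x)) := by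
      rw [intervalIntegral.integral_div, integral_rpow (Or.inl (by linarith))]
      rw [Real.zero_rpow (by linarith : α + 1 ≠ 0)]
      rw [div_div]
      ring_nf
    rw [F]
    calc ∫ t in (0:ℝ)..x, fa α t ≤ ∫ t in (0:ℝ)..x, t ^ α / (1 - x) := hmono
    _ = x ^ (1 + α) / ((1 + α) * (1 - x)) := hval
  have hpos : 0 < (1 + α) * (1 - x) := by
    apply mul_pos <;> linarith
  calc F α x * ((1 + α) * (1 - x)) ≤ (x ^ (1 + α) / ((1 + α) * (1 - x))) * ((1 + α) * (1 - x)) :=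
        mul_le_mul_of_nonneg_right key hpos.le
  _ = x ^ (1 + α) := by field_simp [(sub_pos.mpr h1).ne']

lemma Psi_le (hα : 0 < α) (hα1 : α < 1) (hγ : 0 ≤ γ) {u : ℝ} (hu : 0 < u) :
    Psi α γ u ≤ 2 * u ^ (-(α / (1 + α))) + 2 ^ α := by
  set x := X α u with hx
  obtain ⟨hx0, hx1⟩ := X_mem hα hu
  have hFx : F α x = u := F_X hα hu
  have hnum : (1 - x) ^ γ ≤ 1 :=
    Real.rpow_le_one (by linarith) (by linarith) hγ
  have hxα : 0 < x ^ α := Real.rpow_pos_of_pos hx0 α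
  have hPsile : Psi α γ u ≤ (x ^ α)⁻¹ := by
    rw [Psi, ← hx, div_eq_mul_inv]
    nlinarith [inv_pos.mpr hxα]
  have hterm1 : (0:ℝ) ≤ 2 * u ^ (-(α / (1 + α))) := by positivity
  have hterm2 : (0:ℝ) ≤ (2:ℝ) ^ α := by positivity
  by_cases hhalf : (2⁻¹ : ℝ) ≤ x
  · -- x ≥ 1/2 : Psi ≤ 2^α
    have h2 : (x ^ α)⁻¹ ≤ (2:ℝ) ^ α := by
      rw [← Real.inv_rpow hx0.le]
      have : x⁻¹ ≤ 2 := by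
        rw [inv_le_comm₀ hx0 (by norm_num)]
        linarith
      exact Real.rpow_le_rpow (by positivity) this hα.le
    linarith
  · -- x < 1/2
    push_neg at hhalf
    have h1x : (2⁻¹:ℝ) ≤ 1 - x := by linarith
    have hkey : u / 2 ≤ x ^ (1 + α) := by
      have hFle := F_le hα hx0.le hx1
      rw [hFx] at hFle
      have hfac : (1:ℝ)/2 ≤ (1 + α) * (1 - x) := by nlinarith
      calc u / 2 = u * (1/2) := by ring
      _ ≤ u * ((1 + α) * (1 - x)) := by
            apply mul_le_mul_of_nonneg_left hfac hu.le
      _ ≤ x ^ (1 + α) := by rw [mul_comm] at hFle ⊢; exact hFle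
    have hu2 : (0:ℝ) < u / 2 := by linarith
    have hxge : (u / 2) ^ ((1 + α)⁻¹) ≤ x := by
      have h := Real.rpow_le_rpow hu2.le hkey (by positivity : (0:ℝ) ≤ (1 + α)⁻¹)
      rwa [← Real.rpow_mul hx0.le,
        mul_inv_cancel₀ (by linarith : (1:ℝ) + α ≠ 0), Real.rpow_one] at h
    have hxαge : (u / 2) ^ ((1 + α)⁻¹ * α) ≤ x ^ α := by
      rw [Real.rpow_mul hu2.le]
      exact Real.rpow_le_rpow (by positivity) hxge hα.le
    have hinv : (x ^ α)⁻¹ ≤ ((u / 2) ^ ((1 + α)⁻¹ * α))⁻¹ := by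
      apply inv_anti₀ (by positivity) hxαge
    have hrw : ((u / 2) ^ ((1 + α)⁻¹ * α))⁻¹ = 2 ^ ((1 + α)⁻¹ * α) * u ^ (-((1 + α)⁻¹ * α)) := by
      rw [Real.div_rpow hu.le (by norm_num : (0:ℝ) ≤ 2), inv_div,
        Real.rpow_neg hu.le, div_eq_mul_inv]
    have h2exp : (2:ℝ) ^ ((1 + α)⁻¹ * α) ≤ 2 := by
      calc (2:ℝ) ^ ((1 + α)⁻¹ * α) ≤ (2:ℝ) ^ (1:ℝ) := by
            apply Real.rpow_le_rpow_of_exponent_le (by norm_num)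
            rw [inv_mul_le_iff₀ (by linarith : (0:ℝ) < 1 + α)]
            linarith
      _ = 2 := Real.rpow_one 2
    have hexp_eq : -((1 + α)⁻¹ * α) = -(α / (1 + α)) := by ring
    have : (x ^ α)⁻¹ ≤ 2 * u ^ (-(α / (1 + α))) := by
      rw [← hexp_eq]
      calc (x ^ α)⁻¹ ≤ 2 ^ ((1 + α)⁻¹ * α) * u ^ (-((1 + α)⁻¹ * α)) := by rw [← hrw]; exact hinv
      _ ≤ 2 * u ^ (-((1 + α)⁻¹ * α)) := by
            apply mul_le_mul_of_nonneg_right h2exp (by positivity)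
    linarith

lemma integrable_exp_rpow {k : ℝ} (hk : 0 < k) {δ : ℝ} (hδ0 : 0 < δ) (hδ1 : δ < 1) :
    IntegrableOn (fun v : ℝ => Real.exp (-(k * v)) * v ^ (-δ)) (Ioi 0) volume := by
  have hsplit : Ioi (0:ℝ) = Ioc 0 1 ∪ Ioi 1 := (Set.Ioc_union_Ioi_eq_Ioi zero_le_one).symm
  rw [hsplit]
  apply IntegrableOn.union
  · -- on Ioc 0 1, bounded by v ^ (-δ)
    have hbase : IntegrableOn (fun v : ℝ => v ^ (-δ)) (Ioc (0:ℝ) 1) volume :=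
      (intervalIntegral.intervalIntegrable_rpow' (by linarith : (-1:ℝ) < -δ)).1
    apply Integrable.mono' hbase
    · apply ContinuousOn.aestronglyMeasurable _ measurableSet_Ioc
      intro v hv
      apply ContinuousWithinAt.mul
      · exact (Real.continuous_exp.comp
          (continuous_const.mul continuous_id).neg).continuousWithinAt
      · exact (Real.continuousAt_rpow_const v (-δ)
          (Or.inl (ne_of_gt hv.1))).continuousWithinAt
    · filter_upwards [self_mem_ae_restrict measurableSet_Ioc] with v hv
      have hv0 : 0 < v := hv.1
      have h1 : Real.exp (-(k * v)) ≤ 1 := by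
        apply Real.exp_le_one_iff.mpr
        simp only [neg_nonpos]
        positivity
      have h2 : (0:ℝ) ≤ v ^ (-δ) := Real.rpow_nonneg hv0.le _
      rw [Real.norm_eq_abs, abs_of_nonneg (by positivity)]
      nlinarith [Real.exp_pos (-(k * v))]
  · -- on Ioi 1, bounded by exp (-(k*v))
    have hbase : IntegrableOn (fun v : ℝ => Real.exp (-k * v)) (Ioi (1:ℝ)) volume :=
      exp_neg_integrableOn_Ioi 1 hk
    apply Integrable.mono' hbase
    · apply ContinuousOn.aestronglyMeasurable _ measurableSet_Ioi
      intro v hv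
      apply ContinuousWithinAt.mul
      · exact (Real.continuous_exp.comp
          (continuous_const.mul continuous_id).neg).continuousWithinAt
      · exact (Real.continuousAt_rpow_const v (-δ)
          (Or.inl (ne_of_gt (lt_trans one_pos hv)))).continuousWithinAt
    · filter_upwards [self_mem_ae_restrict measurableSet_Ioi] with v hv
      have hv1 : (1:ℝ) ≤ v := le_of_lt hv
      have h2 : v ^ (-δ) ≤ 1 :=
        Real.rpow_le_one_of_one_le_of_nonpos hv1 (by linarith)
      have h3 : (0:ℝ) < Real.exp (-(k * v)) := Real.exp_pos _
      rw [Real.norm_eq_abs, abs_of_nonneg (by positivity), neg_mul]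
      nlinarith [Real.rpow_nonneg (by linarith : (0:ℝ) ≤ v) (-δ)]

lemma integrable_exp_Psi (hα : 0 < α) (hα1 : α < 1) (hγ : 0 ≤ γ)
    {k1 k2 : ℝ} (hk1 : 0 < k1) (hk2 : 0 < k2) :
    IntegrableOn (fun v => Real.exp (-(k1 * v)) * Psi α γ (k2 * v)) (Ioi 0) volume := by
  set δ : ℝ := α / (1 + α) with hδ
  have hδ0 : 0 < δ := by positivity
  have hδ1 : δ < 1 := by
    rw [hδ, div_lt_one (by linarith)]; linarith
  have hbound : IntegrableOn
      (fun v : ℝ => (2 * k2 ^ (-δ)) * (Real.exp (-(k1 * v)) * v ^ (-δ))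
        + (2:ℝ) ^ α * Real.exp (-(k1 * v))) (Ioi 0) volume := by
    apply Integrable.add
    · exact (integrable_exp_rpow hk1 hδ0 hδ1).const_mul _
    · have : IntegrableOn (fun v : ℝ => Real.exp (-k1 * v)) (Ioi (0:ℝ)) volume :=
        exp_neg_integrableOn_Ioi 0 hk1
      simpa [neg_mul] using this.const_mul ((2:ℝ) ^ α)
  apply Integrable.mono' hbound
  · apply AEStronglyMeasurable.mul
    · exact (Real.continuous_exp.comp (continuous_const.mul continuous_id).neg
        ).aestronglyMeasurable
    · exact ((Psi_measurable hα hγ).comp (measurable_const_mul k2)).aestronglyMeasurable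
  · filter_upwards [self_mem_ae_restrict measurableSet_Ioi] with v hv
    have hv0 : (0:ℝ) < v := hv
    have hk2v : 0 < k2 * v := by positivity
    have hexp : (0:ℝ) < Real.exp (-(k1 * v)) := Real.exp_pos _
    have hPsi := Psi_le hα hα1 hγ hk2v
    have hPsipos := Psi_pos hα hγ hk2v
    rw [Real.norm_eq_abs, abs_of_nonneg (by positivity)]
    have hrw : (k2 * v) ^ (-δ) = k2 ^ (-δ) * v ^ (-δ) :=
      Real.mul_rpow hk2.le hv0.le
    rw [hrw] at hPsi
    calc Real.exp (-(k1 * v)) * Psi α γ (k2 * v)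
        ≤ Real.exp (-(k1 * v)) * (2 * (k2 ^ (-δ) * v ^ (-δ)) + 2 ^ α) :=
          mul_le_mul_of_nonneg_left hPsi hexp.le
    _ = (2 * k2 ^ (-δ)) * (Real.exp (-(k1 * v)) * v ^ (-δ))
        + (2:ℝ) ^ α * Real.exp (-(k1 * v)) := by ring

/-- The inner integral evaluated. -/
lemma inner_integral_eq (hα : 0 < α) (hγ : 0 ≤ γ) {lam a β : ℝ} (hab : 0 ≤ a * β)
    {x : ℝ} (hx0 : 0 ≤ x) (hx1 : x < 1) :
    ∫ y in (0:ℝ)..x, (lam * (a * β * y) ^ α + γ) / (1 - y)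
      = lam * (a * β) ^ α * F α x + γ * (-Real.log (1 - x)) := by
  have hcongr : ∀ y ∈ Set.uIcc (0:ℝ) x,
      (lam * (a * β * y) ^ α + γ) / (1 - y)
        = lam * (a * β) ^ α * fa α y + γ * (1 - y)⁻¹ := by
    intro y hy
    have hy0 : 0 ≤ y := by
      rcases hy with ⟨h1, _⟩
      simpa [min_eq_left hx0] using h1
    have hy1 : y < 1 := mem_uIcc_lt_one one_pos hx1 hy
    have hmul : (a * β * y) ^ α = (a * β) ^ α * y ^ α := by
      rw [Real.mul_rpow hab hy0]
    rw [hmul, fa]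
    have h1y : (1:ℝ) - y ≠ 0 := by intro h; linarith [sub_eq_zero.mp h]
    field_simp
  rw [intervalIntegral.integral_congr hcongr]
  have hint1 : IntervalIntegrable (fun y => lam * (a * β) ^ α * fa α y) volume 0 x :=
    (fa_intervalIntegrable hα one_pos hx1).const_mul _
  have hint2 : IntervalIntegrable (fun y : ℝ => γ * (1 - y)⁻¹) volume 0 x := by
    apply IntervalIntegrable.const_mul
    apply ContinuousOn.intervalIntegrable
    intro t ht
    have ht1 : t < 1 := mem_uIcc_lt_one one_pos hx1 ht
    exact ((continuousAt_const.sub continuousAt_id).continuousWithinAt.inv₀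
      (by intro h; simp at h; linarith [sub_eq_zero.mp h]))
  rw [intervalIntegral.integral_add hint1 hint2,
    intervalIntegral.integral_const_mul, intervalIntegral.integral_const_mul,
    integral_one_sub_inv one_pos hx1, F]
  simp [Real.log_one]

/-- The main change-of-variables identity:
`C(β) = ∫_{(0,∞)} exp(-cβ u) Psi(u) du` with `cβ = lam (aβ)^α`. -/
lemma Cfun_eq (hα : 0 < α) (hα1 : α < 1) (hγ : 0 ≤ γ) {lam a β : ℝ}
    (ha : 0 < a) (hβ : 0 < β) :
    Cfun a (fun x => lam * x ^ α + γ) β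
      = ∫ u in Ioi (0:ℝ), Real.exp (-(lam * (a * β) ^ α * u)) * Psi α γ u := by
  set c : ℝ := lam * (a * β) ^ α with hc
  have hab : 0 ≤ a * β := by positivity
  have hkey : ∀ x ∈ Ioo (0:ℝ) 1,
      (1 - x)⁻¹ * Real.exp (-∫ y in (0:ℝ)..x,
          ((fun x => lam * x ^ α + γ) (a * β * y)) / (1 - y))
        = |fa α x| • ((fun u => Real.exp (-(c * u)) * Psi α γ u) (F α x)) := by
    intro x hx
    obtain ⟨hx0, hx1⟩ := hx
    rw [inner_integral_eq hα hγ hab hx0.le hx1]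
    have hXF : X α (F α x) = x := X_F hα ⟨hx0, hx1⟩
    have h1x : (0:ℝ) < 1 - x := by linarith
    have hfa_pos : 0 < fa α x := fa_pos hα hx0 hx1
    rw [smul_eq_mul, abs_of_pos hfa_pos]
    simp only [Psi, hXF]
    rw [neg_add, Real.exp_add]
    have hexp2 : Real.exp (-(γ * -Real.log (1 - x))) = (1 - x) ^ γ := by
      rw [Real.rpow_def_of_pos h1x]
      ring_nf
    rw [hexp2, fa]
    have hxα : 0 < x ^ α := Real.rpow_pos_of_pos hx0 α
    field_simp
    ring
    rw [hc, mul_comm (F α x)]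
  have step1 : Cfun a (fun x => lam * x ^ α + γ) β
      = ∫ x in Ioo (0:ℝ) 1, (1 - x)⁻¹ * Real.exp (-∫ y in (0:ℝ)..x,
          ((fun x => lam * x ^ α + γ) (a * β * y)) / (1 - y)) := by
    rw [Cfun, intervalIntegral.integral_of_le zero_le_one, integral_Ioc_eq_integral_Ioo]
  have himg := integral_image_eq_integral_abs_deriv_smul measurableSet_Ioo
    (fun x (hx : x ∈ Ioo (0:ℝ) 1) => (F_hasDerivAt hα hx.2).hasDerivWithinAt)
    (F_injOn hα) (fun u => Real.exp (-(c * u)) * Psi α γ u)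
  rw [F_image hα] at himg
  rw [step1, setIntegral_congr_fun measurableSet_Ioo hkey]
  exact himg.symm

end BetaCAux

/-- for the sub-linear power firing function `b(x) = λ x^α + γ`
with `λ > 0`, `0 < α < 1` and `γ ≥ 0`, the map `β ↦ β C(β)` is strictly
increasing on `(0, ∞)`. -/
theorem betaC_strictMonoOn_sublinear
    (a lam α γ : ℝ) (ha : 0 < a) (hlam : 0 < lam)
    (hα : 0 < α) (hα1 : α < 1) (hγ : 0 ≤ γ) :
    StrictMonoOn
      (fun β => β * Cfun a (fun x => lam * x ^ α + γ) β) (Set.Ioi 0) := by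
  intro β hβ β' hβ' hlt
  simp only [Set.mem_Ioi] at hβ hβ'
  simp only
  open BetaCAux in
  rw [Cfun_eq hα hα1 hγ ha hβ, Cfun_eq hα hα1 hγ ha hβ']
  set c : ℝ := lam * (a * β) ^ α with hc
  set c' : ℝ := lam * (a * β') ^ α with hc'
  set r : ℝ := (β / β') ^ α with hr
  have hcpos : 0 < c := by
    rw [hc]; positivity
  have hc'pos : 0 < c' := by
    rw [hc']; positivity
  have hr0 : 0 < r := by
    rw [hr]; positivity
  have hr1 : r < 1 := by
    rw [hr]
    exact Real.rpow_lt_one (by positivity) ((div_lt_one hβ').mpr hlt) hα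
  have hβ'ne : β' ≠ 0 := ne_of_gt hβ'
  have hcrc : c' * r = c := by
    rw [hc', hr, hc, mul_assoc, ← Real.mul_rpow (by positivity) (by positivity)]
    congr 2
    field_simp
  -- scaling identity
  have hscale : ∫ u in Ioi (0:ℝ), Real.exp (-(c' * u)) * BetaCAux.Psi α γ u
      = r * ∫ v in Ioi (0:ℝ), Real.exp (-(c * v)) * BetaCAux.Psi α γ (r * v) := by
    have h := MeasureTheory.integral_comp_mul_left_Ioi
      (fun u => Real.exp (-(c' * u)) * BetaCAux.Psi α γ u) 0 hr0
    rw [mul_zero] at h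
    have heq : ∀ v : ℝ, Real.exp (-(c' * (r * v))) * BetaCAux.Psi α γ (r * v)
        = Real.exp (-(c * v)) * BetaCAux.Psi α γ (r * v) := by
      intro v
      congr 2
      rw [← mul_assoc, hcrc]
    simp only [heq] at h
    rw [h, smul_eq_mul, ← mul_assoc, mul_inv_cancel₀ (ne_of_gt hr0), one_mul]
  rw [hscale]
  -- integrability
  have hI1 : IntegrableOn (fun v => Real.exp (-(c * v)) * BetaCAux.Psi α γ v)
      (Ioi (0:ℝ)) volume := by
    have := BetaCAux.integrable_exp_Psi hα hα1 hγ hcpos one_pos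
    simpa using this
  have hI2 : IntegrableOn (fun v => Real.exp (-(c * v)) * BetaCAux.Psi α γ (r * v))
      (Ioi (0:ℝ)) volume := BetaCAux.integrable_exp_Psi hα hα1 hγ hcpos hr0
  set I₁ : ℝ := ∫ v in Ioi (0:ℝ), Real.exp (-(c * v)) * BetaCAux.Psi α γ v with hI₁
  set I₂ : ℝ := ∫ v in Ioi (0:ℝ), Real.exp (-(c * v)) * BetaCAux.Psi α γ (r * v) with hI₂
  -- β < β' * r
  have hβr : β < β' * r := by
    rw [hr, Real.div_rpow hβ.le hβ'.le]
    have h1 : β' * (β ^ α / β' ^ α) = β ^ α * β' ^ ((1:ℝ) - α) := by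
      rw [Real.rpow_sub hβ', Real.rpow_one]
      field_simp
    rw [h1]
    have h2 : β = β ^ α * β ^ ((1:ℝ) - α) := by
      rw [← Real.rpow_add hβ]
      norm_num
    calc β = β ^ α * β ^ ((1:ℝ) - α) := h2
    _ < β ^ α * β' ^ ((1:ℝ) - α) := by
        apply mul_lt_mul_of_pos_left _ (Real.rpow_pos_of_pos hβ α)
        exact Real.rpow_lt_rpow hβ.le hlt (by linarith)
  -- pointwise strict inequality
  set g : ℝ → ℝ := fun v => β' * r * (Real.exp (-(c * v)) * BetaCAux.Psi α γ (r * v))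
      - β * (Real.exp (-(c * v)) * BetaCAux.Psi α γ v) with hg
  have hgpos : ∀ v ∈ Ioi (0:ℝ), 0 < g v := by
    intro v hv
    have hv0 : (0:ℝ) < v := hv
    have hrv : 0 < r * v := by positivity
    have hPsiv : 0 < BetaCAux.Psi α γ v := BetaCAux.Psi_pos hα hγ hv0
    have hPsirv : BetaCAux.Psi α γ v ≤ BetaCAux.Psi α γ (r * v) := by
      apply BetaCAux.Psi_antitoneOn hα hγ hrv hv0
      nlinarith
    have hexp : 0 < Real.exp (-(c * v)) := Real.exp_pos _
    have h1 : β * BetaCAux.Psi α γ v < β' * r * BetaCAux.Psi α γ (r * v) := by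
      calc β * BetaCAux.Psi α γ v < β' * r * BetaCAux.Psi α γ v :=
            mul_lt_mul_of_pos_right hβr hPsiv
      _ ≤ β' * r * BetaCAux.Psi α γ (r * v) := by
            apply mul_le_mul_of_nonneg_left hPsirv
            positivity
    rw [hg]
    simp only
    nlinarith
  have hgint : IntegrableOn g (Ioi (0:ℝ)) volume := by
    apply Integrable.sub (hI2.const_mul _) (hI1.const_mul _)
  have hgI : ∫ v in Ioi (0:ℝ), g v = β' * r * I₂ - β * I₁ := by
    rw [hg]
    rw [integral_sub (hI2.const_mul _) (hI1.const_mul _)]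
    rw [MeasureTheory.integral_const_mul, MeasureTheory.integral_const_mul, hI₁, hI₂]
  have h0 : 0 < ∫ v in Ioi (0:ℝ), g v := by
    have hae : 0 ≤ᵐ[volume.restrict (Ioi (0:ℝ))] g := by
      filter_upwards [self_mem_ae_restrict measurableSet_Ioi] with v hv
      exact (hgpos v hv).le
    have hsub : Ioi (0:ℝ) ⊆ Function.support g ∩ Ioi 0 := fun v hv =>
      ⟨ne_of_gt (hgpos v hv), hv⟩
    rw [setIntegral_pos_iff_support_of_nonneg_ae hae hgint]
    calc (0:ENNReal) < ⊤ := by simp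
    _ = volume (Ioi (0:ℝ)) := Real.volume_Ioi.symm
    _ ≤ volume (Function.support g ∩ Ioi 0) := measure_mono hsub
  rw [hgI] at h0
  calc β * I₁ < β' * r * I₂ := by linarith
  _ = β' * (r * I₂) := by ring
end

section
/- Let b(x) = λx^α + γ with λ > 0, 0 < α < 1 and γ ≥ 0. Then there exists a unique β > 0 satisfying the fixed point equation β·C(β) = 1 (i.e. the mean-field equations admit a unique non-trivial invariant distribution). -/
open MeasureTheory Real Filter Set
open scoped ENNReal Topology

section fpAux
variable {α c γ : ℝ}

noncomputable def jInt (α : ℝ) (y : ℝ) : ℝ := y ^ α / (1 - y)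

noncomputable def Jaux (α x : ℝ) : ℝ := ∫ y in (0:ℝ)..x, jInt α y

noncomputable def Haux (α u : ℝ) : ℝ := Jaux α (1 - Real.exp (-u))

lemma measurable_jInt (hα : 0 ≤ α) : Measurable (jInt α) :=
  ((Real.continuous_rpow_const hα).measurable).div ((continuous_const.sub continuous_id).measurable)

lemma continuousAt_jInt (hα : 0 ≤ α) {y : ℝ} (hy : y ≠ 1) : ContinuousAt (jInt α) y := by
  apply ContinuousAt.div ((Real.continuous_rpow_const hα).continuousAt)
    (continuous_const.sub continuous_id).continuousAt
  simpa [sub_ne_zero] using (Ne.symm hy)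

lemma contOn_jInt (hα : 0 ≤ α) {s : Set ℝ} (hs : ∀ y ∈ s, y ≠ 1) : ContinuousOn (jInt α) s :=
  fun y hy => (continuousAt_jInt hα (hs y hy)).continuousWithinAt

lemma intervalIntegrable_jInt (hα : 0 ≤ α) {x : ℝ} (hx : x < 1) :
    IntervalIntegrable (jInt α) volume 0 x := by
  apply ContinuousOn.intervalIntegrable
  apply contOn_jInt hα
  intro y hy
  have h2 : y ≤ max 0 x := hy.2
  have : y < 1 := lt_of_le_of_lt h2 (max_lt one_pos hx)
  exact this.ne

lemma hasDerivAt_J (hα : 0 ≤ α) {x : ℝ} (hx : x < 1) :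
    HasDerivAt (Jaux α) (jInt α x) x := by
  apply intervalIntegral.integral_hasDerivAt_right (intervalIntegrable_jInt hα hx)
    ((measurable_jInt hα).stronglyMeasurable.stronglyMeasurableAtFilter)
    (continuousAt_jInt hα hx.ne)

noncomputable def hInt (α v : ℝ) : ℝ := (1 - Real.exp (-v)) ^ α

lemma hasDerivAt_H (hα : 0 ≤ α) (u : ℝ) : HasDerivAt (Haux α) (hInt α u) u := by
  have h1 : 1 - Real.exp (-u) < 1 := by
    have := Real.exp_pos (-u); linarith
  have hg : HasDerivAt (fun u : ℝ => 1 - Real.exp (-u)) (Real.exp (-u)) u := by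
    have := ((Real.hasDerivAt_exp (-u)).comp u (hasDerivAt_neg u))
    exact ((hasDerivAt_const u (1:ℝ)).sub this).congr_deriv (by simp)
  have := (hasDerivAt_J hα h1).comp u hg
  refine this.congr_deriv ?_
  unfold jInt hInt
  field_simp
  ring

lemma continuous_H (hα : 0 ≤ α) : Continuous (Haux α) :=
  continuous_iff_continuousAt.2 fun u => (hasDerivAt_H hα u).continuousAt

lemma continuous_hInt (hα : 0 ≤ α) : Continuous (hInt α) :=
  (Real.continuous_rpow_const hα).comp (continuous_const.sub (continuous_exp.comp continuous_neg))

lemma Haux_zero : Haux α 0 = 0 := by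
  simp [Haux, Jaux]

lemma Haux_eq_integral (hα : 0 ≤ α) (u : ℝ) :
    Haux α u = ∫ v in (0:ℝ)..u, hInt α v := by
  have := intervalIntegral.integral_eq_sub_of_hasDerivAt
    (f := Haux α) (f' := hInt α) (a := 0) (b := u)
    (fun v _ => hasDerivAt_H hα v) ((continuous_hInt hα).intervalIntegrable 0 u)
  rw [this, Haux_zero, sub_zero]

lemma hInt_mem {v : ℝ} (hv : 0 ≤ v) : 0 ≤ 1 - Real.exp (-v) := by
  have : Real.exp (-v) ≤ 1 := Real.exp_le_one_iff.2 (by linarith)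
  linarith

lemma hInt_nonneg (hα : 0 ≤ α) {v : ℝ} (hv : 0 ≤ v) : 0 ≤ hInt α v :=
  Real.rpow_nonneg (hInt_mem hv) α

lemma Haux_nonneg (hα : 0 ≤ α) {u : ℝ} (hu : 0 ≤ u) : 0 ≤ Haux α u := by
  rw [Haux_eq_integral hα]
  exact intervalIntegral.integral_nonneg hu (fun v hv => hInt_nonneg hα hv.1)

lemma hInt_le (hα : 0 ≤ α) {v c : ℝ} (hv : 0 ≤ v) (hvc : v ≤ c) : hInt α v ≤ c ^ α := by
  apply Real.rpow_le_rpow (hInt_mem hv) _ hα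
  nlinarith [Real.add_one_le_exp (-v)]

lemma Haux_le (hα : 0 ≤ α) {u : ℝ} (hu : 0 ≤ u) : Haux α u ≤ u * u ^ α := by
  rw [Haux_eq_integral hα]
  calc ∫ v in (0:ℝ)..u, hInt α v ≤ ∫ _v in (0:ℝ)..u, u ^ α := by
        apply intervalIntegral.integral_mono_on hu ((continuous_hInt hα).intervalIntegrable 0 u)
          (intervalIntegrable_const)
        intro v hv
        exact hInt_le hα hv.1 hv.2
    _ = u * u ^ α := by simp

lemma hInt_strictMono (hα : 0 < α) {v w : ℝ} (hv : 0 ≤ v) (hvw : v < w) :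
    hInt α v < hInt α w := by
  apply Real.rpow_lt_rpow (hInt_mem hv) _ hα
  have : Real.exp (-w) < Real.exp (-v) := Real.exp_lt_exp.2 (by linarith)
  linarith

lemma hInt_mono (hα : 0 ≤ α) {v w : ℝ} (hv : 0 ≤ v) (hvw : v ≤ w) :
    hInt α v ≤ hInt α w := by
  apply Real.rpow_le_rpow (hInt_mem hv) _ hα
  have : Real.exp (-w) ≤ Real.exp (-v) := Real.exp_le_exp.2 (by linarith)
  linarith

lemma Haux_sub (hα : 0 ≤ α) (t u : ℝ) :
    Haux α u - Haux α t = ∫ v in t..u, hInt α v := by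
  rw [Haux_eq_integral hα, Haux_eq_integral hα,
    ← intervalIntegral.integral_interval_sub_left
      ((continuous_hInt hα).intervalIntegrable 0 u)
      ((continuous_hInt hα).intervalIntegrable 0 t)]

lemma Haux_ge (hα : 0 ≤ α) {u : ℝ} (hu : 0 ≤ u) :
    hInt α 1 * (u - 1) ≤ Haux α u := by
  rcases le_or_gt u 1 with h | h
  · have h1 : 0 ≤ hInt α 1 := hInt_nonneg hα zero_le_one
    nlinarith [Haux_nonneg hα hu]
  · have key := Haux_sub hα 1 u
    have h2 : ∫ _v in (1:ℝ)..u, hInt α 1 ≤ ∫ v in (1:ℝ)..u, hInt α v := by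
      apply intervalIntegral.integral_mono_on h.le intervalIntegrable_const
        ((continuous_hInt hα).intervalIntegrable 1 u)
      exact fun v hv => hInt_mono hα zero_le_one hv.1
    rw [intervalIntegral.integral_const, smul_eq_mul] at h2
    have h3 : 0 ≤ Haux α 1 := Haux_nonneg hα zero_le_one
    have := key
    nlinarith [h2, key]

lemma Haux_lt (hα : 0 < α) {u : ℝ} (hu : 0 < u) :
    Haux α u < u * hInt α u := by
  have h2u : (0:ℝ) < u/2 := by positivity
  have hsplit : Haux α u = (∫ v in (0:ℝ)..(u/2), hInt α v) + ∫ v in (u/2)..u, hInt α v := by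
    rw [Haux_eq_integral hα.le,
      intervalIntegral.integral_add_adjacent_intervals
        ((continuous_hInt hα.le).intervalIntegrable 0 (u/2))
        ((continuous_hInt hα.le).intervalIntegrable (u/2) u)]
  have b1 : (∫ v in (0:ℝ)..(u/2), hInt α v) ≤ (u/2) * hInt α (u/2) := by
    have := intervalIntegral.integral_mono_on (μ := volume) (by linarith : (0:ℝ) ≤ u/2)
      ((continuous_hInt hα.le).intervalIntegrable 0 (u/2)) intervalIntegrable_const
      (fun v hv => hInt_mono hα.le hv.1 hv.2)
    simpa using this
  have b2 : (∫ v in (u/2)..u, hInt α v) ≤ (u/2) * hInt α u := by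
    have := intervalIntegral.integral_mono_on (μ := volume) (by linarith : u/2 ≤ u)
      ((continuous_hInt hα.le).intervalIntegrable (u/2) u) intervalIntegrable_const
      (fun v hv => hInt_mono hα.le (le_trans h2u.le hv.1) hv.2)
    calc (∫ v in (u/2)..u, hInt α v) ≤ ∫ _v in (u/2)..u, hInt α u := this
      _ = (u - u/2) * hInt α u := by simp [smul_eq_mul]
      _ = (u/2) * hInt α u := by ring_nf
  have hstrict : hInt α (u/2) < hInt α u := hInt_strictMono hα h2u.le (by linarith)
  rw [hsplit]
  nlinarith [hstrict, b1, b2]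

noncomputable def qaux (α u : ℝ) : ℝ := Haux α u / u ^ α

lemma qaux_strictMonoOn (hα : 0 < α) (hα1 : α < 1) :
    StrictMonoOn (qaux α) (Ioi (0:ℝ)) := by
  have hderiv : ∀ u ∈ Ioi (0:ℝ), HasDerivAt (qaux α)
      ((hInt α u * u ^ α - Haux α u * (α * u ^ (α - 1))) / (u ^ α) ^ 2) u := by
    intro u hu
    have hu' : (0:ℝ) < u := hu
    exact (hasDerivAt_H hα.le u).div
      (Real.hasDerivAt_rpow_const (Or.inl hu'.ne'))
      (ne_of_gt (Real.rpow_pos_of_pos hu' α))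
  have hpos : ∀ u ∈ Ioi (0:ℝ), 0 < deriv (qaux α) u := by
    intro u hu
    have hu' : (0:ℝ) < u := hu
    rw [(hderiv u hu).deriv]
    apply div_pos _ (pow_pos (Real.rpow_pos_of_pos hu' α) 2)
    have h1 : u ^ α = u ^ (α - 1) * u := by
      rw [← Real.rpow_add_one hu'.ne' (α - 1)]; ring_nf
    have h2 : (0:ℝ) < u ^ (α - 1) := Real.rpow_pos_of_pos hu' (α - 1)
    have h3 : Haux α u < u * hInt α u := Haux_lt hα hu'
    have h4 : 0 ≤ Haux α u := Haux_nonneg hα.le hu'.le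
    rw [h1]
    have : α * Haux α u < u * hInt α u := by nlinarith
    nlinarith
  apply strictMonoOn_of_deriv_pos (convex_Ioi 0)
  · exact fun u hu => ((hderiv u hu).continuousAt).continuousWithinAt
  · intro u hu
    rw [interior_Ioi] at hu
    exact hpos u hu

lemma hInt_pos (hα : 0 ≤ α) : 0 < hInt α 1 := by
  apply Real.rpow_pos_of_pos
  have h := Real.exp_lt_one_iff.2 (by norm_num : (-1:ℝ) < 0)
  linarith

noncomputable def Paux (c γ α β w : ℝ) : ℝ :=
  Real.exp (-(γ * (w / β)) - c * β ^ α * Haux α (w / β))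

noncomputable def Gaux (c γ α β : ℝ) : ℝ := ∫ w in Ioi (0:ℝ), Paux c γ α β w

lemma scaling (hα : 0 < α) {β w : ℝ} (hβ : 0 < β) (hw : 0 < w) :
    β ^ α * Haux α (w / β) = w ^ α * qaux α (w / β) := by
  have hu : (0:ℝ) < w / β := by positivity
  have h1 : (w / β) ^ α = w ^ α / β ^ α := Real.div_rpow hw.le hβ.le α
  unfold qaux
  rw [h1]
  have hβα : (0:ℝ) < β ^ α := Real.rpow_pos_of_pos hβ α
  have hwα : (0:ℝ) < w ^ α := Real.rpow_pos_of_pos hw α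
  field_simp

lemma Paux_strictMono (hα : 0 < α) (hα1 : α < 1) (hc : 0 < c) (hγ : 0 ≤ γ)
    {β₁ β₂ w : ℝ} (h1 : 0 < β₁) (h12 : β₁ < β₂) (hw : 0 < w) :
    Paux c γ α β₁ w < Paux c γ α β₂ w := by
  have h2 : (0:ℝ) < β₂ := lt_trans h1 h12
  apply Real.exp_lt_exp.2
  have hq : qaux α (w / β₂) < qaux α (w / β₁) := by
    apply qaux_strictMonoOn hα hα1 (by positivity : (0:ℝ) < w/β₂) (by positivity : (0:ℝ) < w/β₁)
    apply div_lt_div_of_pos_left hw h1 h12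
  have hs1 := scaling hα h1 hw
  have hs2 := scaling hα h2 hw
  have hwα : (0:ℝ) < w ^ α := Real.rpow_pos_of_pos hw α
  have hγ' : γ * (w / β₂) ≤ γ * (w / β₁) := by
    apply mul_le_mul_of_nonneg_left _ hγ
    apply div_le_div_of_nonneg_left hw.le h1 h12.le
  nlinarith [mul_lt_mul_of_pos_left hq (mul_pos hc hwα)]

lemma Paux_pos {β w : ℝ} : 0 < Paux c γ α β w := Real.exp_pos _

lemma continuous_Paux (hα : 0 ≤ α) {β : ℝ} (hβ : 0 < β) : Continuous (Paux c γ α β) := by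
  apply Real.continuous_exp.comp
  apply Continuous.sub
  · exact (continuous_const.mul (continuous_id.div_const β)).neg
  · exact continuous_const.mul ((continuous_H hα).comp (continuous_id.div_const β))

/-- uniform exponential bound for `β ∈ (0, b₂]`. -/
lemma Paux_le_bound (hα : 0 < α) (hα1 : α < 1) (hc : 0 < c) (hγ : 0 ≤ γ)
    {b₂ β w : ℝ} (hb₂ : 0 < b₂) (hβ : 0 < β) (hβ2 : β ≤ b₂) (hw : 0 < w) :
    Paux c γ α β w ≤
      Real.exp (c * hInt α 1 * b₂ ^ α) * Real.exp (-(c * hInt α 1 * b₂ ^ (α-1)) * w) := by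
  rw [← Real.exp_add]
  apply Real.exp_le_exp.2
  set d := hInt α 1 with hd
  have hdpos : 0 < d := hInt_pos hα.le
  have hu : (0:ℝ) ≤ w / β := by positivity
  have hHge : d * (w / β - 1) ≤ Haux α (w / β) := Haux_ge hα.le hu
  have hβα : β ^ α ≤ b₂ ^ α := Real.rpow_le_rpow hβ.le hβ2 hα.le
  have hβα1 : b₂ ^ (α - 1) ≤ β ^ (α - 1) :=
    Real.rpow_le_rpow_of_nonpos hβ hβ2 (by linarith)
  have hkey : c * d * b₂ ^ (α-1) * w - c * d * b₂ ^ α ≤ c * β ^ α * Haux α (w / β) := by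
    have e1 : β ^ α * (w / β) = β ^ (α - 1) * w := by
      have : β ^ α = β ^ (α - 1) * β := by
        rw [show α = α - 1 + 1 by ring, Real.rpow_add_one hβ.ne']
        ring_nf
      rw [this]
      field_simp
    have e2 : c * d * (β ^ α * (w/β) - β ^ α) ≤ c * β ^ α * Haux α (w / β) := by
      have := mul_le_mul_of_nonneg_left hHge (le_of_lt (mul_pos hc (Real.rpow_pos_of_pos hβ α)))
      calc c * d * (β ^ α * (w/β) - β ^ α) = (c * β ^ α) * (d * (w/β - 1)) := by ring
        _ ≤ (c * β ^ α) * Haux α (w/β) := by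
            apply mul_le_mul_of_nonneg_left hHge (by positivity)
        _ = c * β ^ α * Haux α (w / β) := by ring
    calc c * d * b₂ ^ (α-1) * w - c * d * b₂ ^ α
        ≤ c * d * β ^ (α-1) * w - c * d * β ^ α := by
          have : c * d * b₂ ^ (α-1) * w ≤ c * d * β ^ (α-1) * w := by
            apply mul_le_mul_of_nonneg_right _ hw.le
            apply mul_le_mul_of_nonneg_left hβα1 (by positivity)
          have h2 : c * d * β ^ α ≤ c * d * b₂ ^ α :=
            mul_le_mul_of_nonneg_left hβα (by positivity)
          linarith
      _ = c * d * (β ^ α * (w/β) - β ^ α) := by rw [e1]; ring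
      _ ≤ c * β ^ α * Haux α (w / β) := e2
  have hγw : 0 ≤ γ * (w / β) := by positivity
  nlinarith [hkey]

lemma integrable_bound {A k : ℝ} (hk : 0 < k) :
    IntegrableOn (fun w => A * Real.exp (-k * w)) (Ioi (0:ℝ)) :=
  (exp_neg_integrableOn_Ioi 0 hk).const_mul A

lemma integrableOn_Paux (hα : 0 < α) (hα1 : α < 1) (hc : 0 < c) (hγ : 0 ≤ γ)
    {β : ℝ} (hβ : 0 < β) : IntegrableOn (Paux c γ α β) (Ioi (0:ℝ)) := by
  have hdpos : 0 < hInt α 1 := hInt_pos hα.le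
  have hkpos : 0 < c * hInt α 1 * β ^ (α-1) := by
    have := Real.rpow_pos_of_pos hβ (α-1); positivity
  apply Integrable.mono (integrable_bound (A := Real.exp (c * hInt α 1 * β ^ α)) hkpos)
    ((continuous_Paux hα.le hβ).aestronglyMeasurable.restrict)
  filter_upwards [ae_restrict_mem measurableSet_Ioi] with w hw
  rw [Real.norm_eq_abs, Real.norm_eq_abs, abs_of_pos Paux_pos, abs_of_pos (by positivity)]
  exact Paux_le_bound hα hα1 hc hγ hβ hβ le_rfl hw

lemma Gaux_strictMonoOn (hα : 0 < α) (hα1 : α < 1) (hc : 0 < c) (hγ : 0 ≤ γ) :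
    StrictMonoOn (Gaux c γ α) (Ioi (0:ℝ)) := by
  intro β₁ h1 β₂ h2 h12
  have hint1 := integrableOn_Paux hα hα1 hc hγ (c := c) (γ := γ) h1
  have hint2 := integrableOn_Paux hα hα1 hc hγ (c := c) (γ := γ) h2
  have key : 0 < ∫ w in Ioi (0:ℝ), (Paux c γ α β₂ w - Paux c γ α β₁ w) := by
    have hnn : 0 ≤ᶠ[ae (volume.restrict (Ioi (0:ℝ)))]
        fun w => Paux c γ α β₂ w - Paux c γ α β₁ w := by
      filter_upwards [ae_restrict_mem measurableSet_Ioi] with w hw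
      exact sub_nonneg.2 (Paux_strictMono hα hα1 hc hγ h1 h12 hw).le
    rw [integral_pos_iff_support_of_nonneg_ae hnn (hint2.sub hint1)]
    have hsub : Ioi (0:ℝ) ⊆ Function.support fun w => Paux c γ α β₂ w - Paux c γ α β₁ w :=
      fun w hw => ne_of_gt (sub_pos.2 (Paux_strictMono hα hα1 hc hγ h1 h12 hw))
    rw [Measure.restrict_apply' measurableSet_Ioi]
    calc (0:ℝ≥0∞) < volume (Ioi (0:ℝ)) := by simp
      _ = volume ((Function.support fun w => Paux c γ α β₂ w - Paux c γ α β₁ w) ∩ Ioi 0) := by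
          rw [inter_eq_right.2 hsub]
  rw [integral_sub hint2 hint1] at key
  unfold Gaux
  linarith

lemma continuousOn_Gaux (hα : 0 < α) (hα1 : α < 1) (hc : 0 < c) (hγ : 0 ≤ γ) :
    ContinuousOn (Gaux c γ α) (Ioi (0:ℝ)) := by
  intro β₀ hβ₀
  have hβ₀' : (0:ℝ) < β₀ := hβ₀
  apply ContinuousAt.continuousWithinAt
  have hmem : Ioo (β₀/2) (2*β₀) ∈ 𝓝 β₀ :=
    Ioo_mem_nhds (by linarith) (by linarith)
  set d := hInt α 1 with hd
  have hdpos : 0 < d := hInt_pos hα.le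
  set A := Real.exp (c * d * (2*β₀) ^ α) with hA
  set k := c * d * (2*β₀) ^ (α-1) with hk
  have hkpos : 0 < k := by
    have := Real.rpow_pos_of_pos (by linarith : (0:ℝ) < 2*β₀) (α-1); positivity
  apply MeasureTheory.continuousAt_of_dominated
    (bound := fun w => A * Real.exp (-k * w))
  · filter_upwards [hmem] with β hβ
    exact (continuous_Paux hα.le (by rcases hβ with ⟨h1, _⟩; linarith)).aestronglyMeasurable.restrict
  · filter_upwards [hmem] with β hβ
    rcases hβ with ⟨hb1, hb2⟩
    filter_upwards [ae_restrict_mem measurableSet_Ioi] with w hw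
    rw [Real.norm_eq_abs, abs_of_pos Paux_pos]
    exact Paux_le_bound hα hα1 hc hγ (by linarith) (by linarith) (by linarith) hw
  · exact integrable_bound hkpos
  · apply Filter.Eventually.of_forall
    intro w
    apply ContinuousAt.comp (Real.continuous_exp.continuousAt)
    apply ContinuousAt.sub
    · exact ((continuousAt_const.mul ((continuousAt_const.div continuousAt_id hβ₀'.ne'))).neg)
    · apply ContinuousAt.mul
      · exact continuousAt_const.mul
          (Real.continuousAt_rpow_const β₀ α (Or.inl hβ₀'.ne'))
      · exact (continuous_H hα.le).continuousAt.comp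
          (continuousAt_const.div continuousAt_id hβ₀'.ne')

lemma integral_exp_bound {A k : ℝ} (hA : 0 ≤ A) (hk : 0 < k) :
    ∫ w in Ioi (0:ℝ), A * Real.exp (-k * w) = A * k⁻¹ := by
  rw [MeasureTheory.integral_const_mul]
  have : ∀ w : ℝ, -k * w = -(k * w) := fun w => by ring
  have h2 : (∫ w in Ioi (0:ℝ), Real.exp (-k * w)) = k⁻¹ := by
    have := integral_comp_mul_left_Ioi (fun x => Real.exp (-x)) 0 hk
    simp only [mul_zero] at this
    rw [show (fun w : ℝ => Real.exp (-k * w)) = (fun w : ℝ => Real.exp (-(k * w))) from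
      funext fun w => by ring_nf]
    rw [this, integral_exp_neg_Ioi, neg_zero, Real.exp_zero, smul_eq_mul, mul_one]
  rw [h2]

lemma Gaux_small (hα : 0 < α) (hα1 : α < 1) (hc : 0 < c) (hγ : 0 ≤ γ) :
    ∃ β : ℝ, 0 < β ∧ Gaux c γ α β < 1 := by
  set d := hInt α 1 with hd
  have hdpos : 0 < d := hInt_pos hα.le
  set A₀ := Real.exp (c * d) with hA₀
  have hA₀pos : 0 < A₀ := Real.exp_pos _
  set t := min 1 (c * d / (2 * A₀)) with ht
  have htpos : 0 < t := lt_min one_pos (by positivity)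
  have ht1 : t ≤ 1 := min_le_left _ _
  set β := t ^ (1 - α)⁻¹ with hβdef
  have hβpos : 0 < β := Real.rpow_pos_of_pos htpos _
  have h1α : (0:ℝ) < 1 - α := by linarith
  have hβ1 : β ≤ 1 := Real.rpow_le_one htpos.le ht1 (by positivity)
  have hβpow : β ^ (1 - α) = t := by
    rw [hβdef, ← Real.rpow_mul htpos.le, inv_mul_cancel₀ h1α.ne', Real.rpow_one]
  refine ⟨β, hβpos, ?_⟩
  have hk : (0:ℝ) < c * d * β ^ (α - 1) := by
    have := Real.rpow_pos_of_pos hβpos (α - 1); positivity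
  have hbound : Gaux c γ α β ≤ Real.exp (c * d * β ^ α) * (c * d * β ^ (α-1))⁻¹ := by
    have hmono : Gaux c γ α β ≤
        ∫ w in Ioi (0:ℝ), Real.exp (c * d * β ^ α) * Real.exp (-(c * d * β ^ (α-1)) * w) := by
      apply setIntegral_mono_on (integrableOn_Paux hα hα1 hc hγ hβpos)
        (integrable_bound hk) measurableSet_Ioi
      exact fun w hw => Paux_le_bound hα hα1 hc hγ hβpos hβpos le_rfl hw
    calc Gaux c γ α β ≤ _ := hmono
      _ = Real.exp (c * d * β ^ α) * (c * d * β ^ (α-1))⁻¹ :=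
        integral_exp_bound (Real.exp_pos _).le hk
  have hβα : β ^ α ≤ 1 := Real.rpow_le_one hβpos.le hβ1 hα.le
  have hAle : Real.exp (c * d * β ^ α) ≤ A₀ := by
    apply Real.exp_le_exp.2
    nlinarith [mul_pos hc hdpos]
  have hinv : (c * d * β ^ (α-1))⁻¹ = β ^ (1-α) / (c * d) := by
    rw [show (α - 1) = -(1-α) by ring, Real.rpow_neg hβpos.le]
    field_simp
  have hfinal : Real.exp (c * d * β ^ α) * (c * d * β ^ (α-1))⁻¹ ≤ A₀ * (t / (c * d)) := by
    rw [hinv, hβpow]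
    apply mul_le_mul hAle le_rfl (by positivity) hA₀pos.le
  have : A₀ * (t / (c * d)) ≤ 1/2 := by
    have h2 : t ≤ c * d / (2 * A₀) := min_le_right _ _
    calc A₀ * (t / (c*d)) ≤ A₀ * ((c * d / (2 * A₀)) / (c*d)) := by
          apply mul_le_mul_of_nonneg_left _ hA₀pos.le
          apply div_le_div_of_nonneg_right h2 (by positivity)
      _ = 1/2 := by field_simp
  linarith

lemma Gaux_large (hα : 0 < α) (hα1 : α < 1) (hc : 0 < c) (hγ : 0 ≤ γ) :
    ∃ β : ℝ, 0 < β ∧ 1 < Gaux c γ α β := by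
  set K := 3 * γ + c * (3 * 3 ^ α) with hK
  have hKnn : 0 ≤ K := by
    have : (0:ℝ) ≤ 3 ^ α := Real.rpow_nonneg (by norm_num) α
    positivity
  set β := K + 1 with hβdef
  have hβpos : (0:ℝ) < β := by linarith
  refine ⟨β, hβpos, ?_⟩
  have hlog3 : (1:ℝ) < Real.log 3 := by
    rw [Real.lt_log_iff_exp_lt (by norm_num : (0:ℝ) < 3)]
    exact lt_trans Real.exp_one_lt_d9 (by norm_num)
  -- pointwise lower bound on Ioc 0 3
  have hpt : ∀ w ∈ Ioc (0:ℝ) 3, Real.exp (-(K / β)) ≤ Paux c γ α β w := by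
    intro w hw
    apply Real.exp_le_exp.2
    have hw0 : 0 < w := hw.1
    have hw3 : w ≤ 3 := hw.2
    have hu : (0:ℝ) ≤ w / β := by positivity
    have hH : Haux α (w / β) ≤ (w/β) * (w/β) ^ α := Haux_le hα.le hu
    have hwβ1 : w / β ≤ w := by
      rw [div_le_iff₀ hβpos]; nlinarith
    have h2 : (w/β) ^ α ≤ w ^ α := Real.rpow_le_rpow hu hwβ1 hα.le
    have h3 : w ^ α ≤ 3 ^ α := Real.rpow_le_rpow hw0.le hw3 hα.le
    have hβα : β ^ α * (w/β) ^ α = w ^ α := by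
      rw [← Real.mul_rpow hβpos.le hu, mul_div_cancel₀ _ hβpos.ne']
    have hβαpos : (0:ℝ) < β ^ α := Real.rpow_pos_of_pos hβpos α
    -- c * β^α * Haux ≤ c * β^α * (w/β)*(w/β)^α = c * (w/β) * w^α ≤ c*(3/β)*3^α
    have e1 : c * β ^ α * Haux α (w/β) ≤ c * (w/β) * w ^ α := by
      calc c * β ^ α * Haux α (w/β) ≤ c * β ^ α * ((w/β) * (w/β)^α) := by
            apply mul_le_mul_of_nonneg_left hH (by positivity)
        _ = c * (w/β) * (β ^ α * (w/β)^α) := by ring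
        _ = c * (w/β) * w ^ α := by rw [hβα]
    have h4 : (0:ℝ) ≤ w ^ α := Real.rpow_nonneg hw0.le α
    have e2 : c * (w/β) * w ^ α ≤ c * (3/β) * 3 ^ α := by
      have hwβ : w / β ≤ 3 / β := by gcongr
      calc c * (w/β) * w ^ α ≤ c * (3/β) * w ^ α :=
            mul_le_mul_of_nonneg_right (mul_le_mul_of_nonneg_left hwβ hc.le) h4
        _ ≤ c * (3/β) * 3 ^ α := mul_le_mul_of_nonneg_left h3 (by positivity)
    have e3 : γ * (w/β) ≤ γ * (3/β) :=
      mul_le_mul_of_nonneg_left (by gcongr) hγ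
    have : γ * (3/β) + c * (3/β) * 3 ^ α = K / β := by
      rw [hK]; field_simp
    nlinarith [e1, e2, e3]
  have hstep1 : (3:ℝ) * Real.exp (-(K / β)) ≤ ∫ w in Ioc (0:ℝ) 3, Paux c γ α β w := by
    have := setIntegral_mono_on (integrableOn_const (by simp))
      ((integrableOn_Paux hα hα1 hc hγ hβpos).mono_set Ioc_subset_Ioi_self)
      measurableSet_Ioc hpt
    rw [setIntegral_const] at this
    simpa [Real.volume_Ioc] using this
  have hstep2 : (∫ w in Ioc (0:ℝ) 3, Paux c γ α β w) ≤ Gaux c γ α β := by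
    apply setIntegral_mono_set (integrableOn_Paux hα hα1 hc hγ hβpos)
      (Filter.Eventually.of_forall fun w => Paux_pos.le)
      (HasSubset.Subset.eventuallyLE Ioc_subset_Ioi_self)
  have hKβ : K / β < Real.log 3 := by
    rw [div_lt_iff₀ hβpos]
    nlinarith
  have hexp : (1:ℝ)/3 < Real.exp (-(K/β)) := by
    have := Real.exp_lt_exp.2 (neg_lt_neg hKβ)
    rw [Real.exp_neg, Real.exp_log (by norm_num : (0:ℝ) < 3)] at this
    linarith
  linarith

lemma intervalIntegrable_inv_one_sub {x : ℝ} (hx : x < 1) :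
    IntervalIntegrable (fun y : ℝ => (1 - y)⁻¹) volume 0 x := by
  apply ContinuousOn.intervalIntegrable
  intro y hy
  have hy1 : y < 1 := lt_of_le_of_lt hy.2 (max_lt one_pos hx)
  have hc : ContinuousAt (fun y : ℝ => 1 - y) y := (continuous_const.sub continuous_id).continuousAt
  exact (hc.inv₀ (by intro h; rw [sub_eq_zero] at h; exact absurd h.symm hy1.ne)).continuousWithinAt

lemma integral_one_sub_inv {x : ℝ} (hx : x < 1) :
    ∫ y in (0:ℝ)..x, (1 - y)⁻¹ = -Real.log (1 - x) := by
  have hF : ∀ y ∈ uIcc (0:ℝ) x, HasDerivAt (fun y => -Real.log (1 - y)) ((1 - y)⁻¹) y := by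
    intro y hy
    have hy1 : y < 1 := lt_of_le_of_lt hy.2 (max_lt one_pos hx)
    have hlog : HasDerivAt Real.log (1-y)⁻¹ (1-y) := Real.hasDerivAt_log (by linarith)
    have hin : HasDerivAt (fun y : ℝ => 1 - y) (-1) y := by
      exact ((hasDerivAt_const y (1:ℝ)).sub (hasDerivAt_id y)).congr_deriv (by simp)
    have := (hlog.comp y hin).neg
    exact this.congr_deriv (by simp [mul_comm])
  rw [intervalIntegral.integral_eq_sub_of_hasDerivAt hF (intervalIntegrable_inv_one_sub hx)]
  simp

/-- inner integral identity -/
lemma inner_integral_eq {a lam β : ℝ} (ha : 0 < a) (hlam : 0 < lam) (hα : 0 < α)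
    (hβ : 0 < β) {x : ℝ} (hx0 : 0 < x) (hx1 : x < 1) :
    (∫ y in (0:ℝ)..x, (lam * (a * β * y) ^ α + γ) / (1 - y)) =
      (lam * a ^ α) * β ^ α * Jaux α x + γ * (-Real.log (1 - x)) := by
  have hcongr : EqOn (fun y => (lam * (a * β * y) ^ α + γ) / (1 - y))
      (fun y => (lam * a ^ α) * β ^ α * jInt α y + γ * (1 - y)⁻¹) (uIcc (0:ℝ) x) := by
    intro y hy
    have hy0 : 0 ≤ y := le_trans (by simp [hx0.le]) hy.1
    have hy1 : y < 1 := lt_of_le_of_lt hy.2 (max_lt one_pos hx1)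
    have h1 : (a * β * y) ^ α = a ^ α * β ^ α * y ^ α := by
      rw [Real.mul_rpow (by positivity) hy0, Real.mul_rpow ha.le hβ.le]
    simp only [h1]
    unfold jInt
    have hne : (1:ℝ) - y ≠ 0 := by intro h; rw [sub_eq_zero] at h; exact absurd h.symm hy1.ne
    field_simp
  rw [intervalIntegral.integral_congr hcongr, intervalIntegral.integral_add
    (((intervalIntegrable_jInt hα.le hx1)).const_mul _)
    ((intervalIntegrable_inv_one_sub hx1).const_mul _),
    intervalIntegral.integral_const_mul, intervalIntegral.integral_const_mul,
    integral_one_sub_inv hx1]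
  rfl

end fpAux

section fpAux2
variable {α c γ : ℝ}

lemma image_eq {β : ℝ} (hβ : 0 < β) :
    (fun w => 1 - Real.exp (-(w / β))) '' Ioi (0:ℝ) = Ioo (0:ℝ) 1 := by
  ext z
  constructor
  · rintro ⟨w, hw, rfl⟩
    have hw' : (0:ℝ) < w := hw
    have h1 : Real.exp (-(w/β)) < 1 := Real.exp_lt_one_iff.2 (by
      have : 0 < w / β := by positivity
      linarith)
    have h2 : 0 < Real.exp (-(w/β)) := Real.exp_pos _
    exact ⟨by linarith, by linarith⟩
  · rintro ⟨h0, h1⟩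
    refine ⟨-β * Real.log (1 - z), ?_, ?_⟩
    · have hlog : Real.log (1 - z) < 0 :=
        Real.log_neg (by linarith) (by linarith)
      have : 0 < -Real.log (1 - z) := by linarith
      simp only [mem_Ioi]
      nlinarith
    · show 1 - Real.exp (-(-β * Real.log (1 - z) / β)) = z
      have : -(-β * Real.log (1 - z) / β) = Real.log (1 - z) := by field_simp
      rw [this, Real.exp_log (by linarith)]
      ring

lemma key_eq {a lam β : ℝ} (ha : 0 < a) (hlam : 0 < lam) (hα : 0 < α) (hα1 : α < 1)
    (hγ : 0 ≤ γ) (hβ : 0 < β) :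
    β * Cfun a (fun x => lam * x ^ α + γ) β = Gaux (lam * a ^ α) γ α β := by
  set c := lam * a ^ α with hc
  set g2 : ℝ → ℝ := fun x =>
    (1 - x)⁻¹ * Real.exp (-(c * β ^ α * Jaux α x + γ * (-Real.log (1 - x)))) with hg2
  have step1 : Cfun a (fun x => lam * x ^ α + γ) β = ∫ x in Ioo (0:ℝ) 1, g2 x := by
    rw [Cfun, intervalIntegral.integral_of_le zero_le_one,
      MeasureTheory.integral_Ioc_eq_integral_Ioo]
    apply setIntegral_congr_fun measurableSet_Ioo
    intro x hx
    simp only [hg2]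
    rw [inner_integral_eq ha hlam hα hβ hx.1 hx.2]
  -- change of variables
  set f : ℝ → ℝ := fun w => 1 - Real.exp (-(w / β)) with hf
  have hderiv : ∀ w ∈ Ioi (0:ℝ),
      HasDerivWithinAt f (Real.exp (-(w / β)) / β) (Ioi 0) w := by
    intro w _
    have h1 : HasDerivAt (fun w : ℝ => -(w / β)) (-β⁻¹) w := by
      exact ((hasDerivAt_id w).div_const β).neg.congr_deriv (by simp)
    have h2 := (Real.hasDerivAt_exp (-(w/β))).comp w h1
    have h3 := ((hasDerivAt_const w (1:ℝ)).sub h2)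
    have : Real.exp (-(w/β)) / β = 0 - Real.exp (-(w/β)) * -β⁻¹ := by
      field_simp
      ring
    rw [this]
    exact h3.hasDerivWithinAt
  have hinj : InjOn f (Ioi (0:ℝ)) := by
    intro w1 _ w2 _ h
    simp only [hf, sub_right_inj, Real.exp_eq_exp, neg_inj, div_left_inj' hβ.ne'] at h
    exact h
  have step2 : ∫ x in Ioo (0:ℝ) 1, g2 x
      = ∫ w in Ioi (0:ℝ), |Real.exp (-(w / β)) / β| • g2 (f w) := by
    rw [← image_eq hβ]
    exact integral_image_eq_integral_abs_deriv_smul measurableSet_Ioi hderiv hinj g2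
  have step3 : ∀ w ∈ Ioi (0:ℝ),
      |Real.exp (-(w / β)) / β| • g2 (f w) = β⁻¹ * Paux c γ α β w := by
    intro w _
    have habs : |Real.exp (-(w / β)) / β| = Real.exp (-(w / β)) / β := by
      rw [abs_of_pos (by positivity)]
    have h1f : 1 - f w = Real.exp (-(w / β)) := by simp [hf]
    have hlog : Real.log (1 - f w) = -(w / β) := by rw [h1f, Real.log_exp]
    have hJ : Jaux α (f w) = Haux α (w / β) := by
      simp only [hf, Haux]
    rw [smul_eq_mul, habs, hg2]
    simp only [h1f, hJ, Real.log_exp]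
    rw [Paux, show (-(c * β ^ α * Haux α (w/β) + γ * -(-(w/β)))) =
      (-(γ * (w / β)) - c * β ^ α * Haux α (w / β)) by ring]
    rw [div_eq_mul_inv]
    field_simp [Real.exp_ne_zero]
  have step4 : ∫ w in Ioi (0:ℝ), |Real.exp (-(w / β)) / β| • g2 (f w)
      = β⁻¹ * Gaux c γ α β := by
    rw [setIntegral_congr_fun measurableSet_Ioi (fun w hw => step3 w hw), Gaux,
      MeasureTheory.integral_const_mul]
  rw [step1, step2, step4]
  field_simp

end fpAux2

/-- for the sub-linear power firing function `b(x) = λ x^α + γ`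
with `λ > 0`, `0 < α < 1` and `γ ≥ 0`, there exists a unique `β > 0` solving
`β C(β) = 1`, i.e. a unique non-trivial invariant distribution. -/
theorem existsUnique_fixed_point_sublinear
    (a lam α γ : ℝ) (ha : 0 < a) (hlam : 0 < lam)
    (hα : 0 < α) (hα1 : α < 1) (hγ : 0 ≤ γ) :
    ∃! β : ℝ, 0 < β ∧ β * Cfun a (fun x => lam * x ^ α + γ) β = 1 := by
  set c := lam * a ^ α with hc
  have hcpos : 0 < c := by
    have := Real.rpow_pos_of_pos ha α; positivity
  obtain ⟨β₁, hβ₁pos, hsmall⟩ := Gaux_small (c := c) (γ := γ) hα hα1 hcpos hγ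
  obtain ⟨β₂, hβ₂pos, hlarge⟩ := Gaux_large (c := c) (γ := γ) hα hα1 hcpos hγ
  have hmono := Gaux_strictMonoOn (c := c) (γ := γ) hα hα1 hcpos hγ
  have h12 : β₁ < β₂ := by
    by_contra h
    push_neg at h
    rcases eq_or_lt_of_le h with rfl | hlt
    · linarith
    · have := hmono hβ₂pos hβ₁pos hlt
      linarith
  have hIcc : Icc β₁ β₂ ⊆ Ioi (0:ℝ) := fun x hx => lt_of_lt_of_le hβ₁pos hx.1
  have hcont : ContinuousOn (Gaux c γ α) (Icc β₁ β₂) :=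
    (continuousOn_Gaux hα hα1 hcpos hγ).mono hIcc
  have hIVT := intermediate_value_Icc h12.le hcont
  have h1mem : (1:ℝ) ∈ Icc (Gaux c γ α β₁) (Gaux c γ α β₂) := ⟨hsmall.le, hlarge.le⟩
  obtain ⟨β, hβmem, hβeq⟩ := hIVT h1mem
  have hβpos : 0 < β := hIcc hβmem
  refine ⟨β, ⟨hβpos, ?_⟩, ?_⟩
  · rw [key_eq ha hlam hα hα1 hγ hβpos, ← hc, hβeq]
  · rintro y ⟨hypos, hyeq⟩
    have hy : Gaux c γ α y = 1 := by
      rw [← key_eq ha hlam hα hα1 hγ hypos, hyeq]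
    have hβ' : Gaux c γ α β = 1 := hβeq
    exact hmono.injOn hypos hβpos (by rw [hy, hβ'])
end

section
/- Let α > 1. The function Ψ is finite, continuous and strictly decreasing on (0, ∞), Ψ(x) → +∞ as x → 0⁺ and Ψ(x) → 0 as x → +∞. Consequently, for every β > 0 there exists a unique ρ(β) > 0 such that β·Ψ(ρ(β)·β^α) = 1. -/
open MeasureTheory Real Filter Set

/-- `g(u) = ∫₀ᵘ v^α/(1-v) dv`. -/
noncomputable def gfun (α : ℝ) (u : ℝ) : ℝ := ∫ v in (0:ℝ)..u, v ^ α / (1 - v)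

/-- `Ψ(x) = ∫₀¹ (1-u)⁻¹ exp(-x g(u)) du`. -/
noncomputable def Psi (α : ℝ) (x : ℝ) : ℝ :=
  ∫ u in (0:ℝ)..1, (1 - u)⁻¹ * Real.exp (-x * gfun α u)

open intervalIntegral
open scoped Interval

section helpers
variable {α : ℝ}

lemma phi_contOn (hα : 1 < α) : ContinuousOn (fun v : ℝ => v ^ α / (1 - v)) (Iio 1) := by
  apply ContinuousOn.div
  · exact (Real.continuous_rpow_const (by linarith)).continuousOn
  · fun_prop
  · intro v hv
    simp only [mem_Iio] at hv
    intro h; rw [sub_eq_zero] at h; linarith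

lemma phi_intble (hα : 1 < α) {a b : ℝ} (hab : uIcc a b ⊆ Iio 1) :
    IntervalIntegrable (fun v : ℝ => v ^ α / (1 - v)) volume a b :=
  ((phi_contOn hα).mono hab).intervalIntegrable

lemma inv_contOn : ContinuousOn (fun v : ℝ => (1 - v)⁻¹) (Iio 1) := by
  apply ContinuousOn.inv₀
  · fun_prop
  · intro v hv
    simp only [mem_Iio] at hv
    intro h; rw [sub_eq_zero] at h; linarith

lemma inv_intble {a b : ℝ} (hab : uIcc a b ⊆ Iio 1) :
    IntervalIntegrable (fun v : ℝ => (1 - v)⁻¹) volume a b :=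
  (inv_contOn.mono hab).intervalIntegrable

lemma uIcc_sub {u : ℝ} (h0 : 0 ≤ u) (h1 : u < 1) : uIcc (0:ℝ) u ⊆ Iio 1 := by
  rw [uIcc_of_le h0]
  exact fun v hv => lt_of_le_of_lt hv.2 h1

lemma integral_inv_one_sub {u : ℝ} (h1 : u < 1) (h0 : 0 ≤ u) :
    ∫ v in (0:ℝ)..u, (1 - v)⁻¹ = -Real.log (1 - u) := by
  have key : ∀ v ∈ uIcc (0:ℝ) u, HasDerivAt (fun v : ℝ => -Real.log (1 - v)) ((1 - v)⁻¹) v := by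
    intro v hv
    have hv1 : v < 1 := uIcc_sub h0 h1 hv
    have hd : HasDerivAt (fun v : ℝ => 1 - v) (-1) v := by
      simpa using (hasDerivAt_id v).const_sub 1
    have := ((Real.hasDerivAt_log (by intro h; rw [sub_eq_zero] at h; linarith)).comp v hd).neg
    exact (by simpa [mul_comm] using this : HasDerivAt (-Real.log ∘ fun v : ℝ => 1 - v) ((1 - v)⁻¹) v)
  have := intervalIntegral.integral_eq_sub_of_hasDerivAt key (inv_intble (uIcc_sub h0 h1))
  simpa using this

lemma phi_nonneg {v : ℝ} (hv0 : 0 ≤ v) (hv1 : v < 1) : 0 ≤ v ^ α / (1 - v) :=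
  div_nonneg (Real.rpow_nonneg hv0 α) (by linarith)

lemma gfun_nonneg (hα : 1 < α) {u : ℝ} (h0 : 0 ≤ u) (h1 : u < 1) : 0 ≤ gfun α u := by
  apply intervalIntegral.integral_nonneg h0
  intro v hv
  exact phi_nonneg hv.1 (lt_of_le_of_lt hv.2 h1)

lemma gfun_pos (hα : 1 < α) {u : ℝ} (h0 : 0 < u) (h1 : u < 1) : 0 < gfun α u := by
  apply intervalIntegral.intervalIntegral_pos_of_pos_on (phi_intble hα (uIcc_sub h0.le h1))
  · intro v hv
    exact div_pos (Real.rpow_pos_of_pos hv.1 α) (by linarith [lt_trans hv.2 h1])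
  · exact h0

lemma gfun_le (hα : 1 < α) {u : ℝ} (h0 : 0 ≤ u) (h1 : u < 1) :
    gfun α u ≤ -Real.log (1 - u) := by
  rw [← integral_inv_one_sub h1 h0]
  apply intervalIntegral.integral_mono_on h0 (phi_intble hα (uIcc_sub h0 h1))
    (inv_intble (uIcc_sub h0 h1))
  intro v hv
  have hv1 : v < 1 := lt_of_le_of_lt hv.2 h1
  rw [div_le_iff₀ (by linarith : (0:ℝ) < 1 - v)]
  rw [inv_mul_cancel₀ (by intro h; rw [sub_eq_zero] at h; linarith : (1:ℝ) - v ≠ 0)]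
  exact Real.rpow_le_one hv.1 (by linarith) (by linarith)

lemma gfun_ge (hα : 1 < α) {u : ℝ} (h0 : 0 ≤ u) (h1 : u < 1) :
    -Real.log (1 - u) - α ≤ gfun α u := by
  have key : -Real.log (1 - u) - α * u ≤ gfun α u := by
    have hint : ∫ v in (0:ℝ)..u, ((1 - v)⁻¹ - α) = -Real.log (1 - u) - α * u := by
      rw [intervalIntegral.integral_sub (inv_intble (uIcc_sub h0 h1)) intervalIntegrable_const,
        integral_inv_one_sub h1 h0]
      simp [mul_comm]
    rw [← hint]
    apply intervalIntegral.integral_mono_on h0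
      ((inv_intble (uIcc_sub h0 h1)).sub intervalIntegrable_const)
      (phi_intble hα (uIcc_sub h0 h1))
    intro v hv
    have hv1 : v < 1 := lt_of_le_of_lt hv.2 h1
    have hpos : (0:ℝ) < 1 - v := by linarith
    rw [le_div_iff₀ hpos]
    have hb := one_add_mul_self_le_rpow_one_add (by linarith [hv.1] : (-1:ℝ) ≤ v - 1) hα.le
    rw [show (1:ℝ) + (v - 1) = v by ring] at hb
    have h1 : (1 - v)⁻¹ * (1 - v) = 1 := inv_mul_cancel₀ hpos.ne'
    nlinarith [hb, h1]
  nlinarith [Real.rpow_nonneg h0 α, gfun_nonneg hα h0 h1]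

end helpers

section helpers2
variable {α : ℝ}

lemma gfun_contOn (hα : 1 < α) : ContinuousOn (gfun α) (Ico 0 1) := by
  intro u₀ hu₀
  set b : ℝ := (u₀ + 1) / 2 with hb
  have hub : u₀ < b := by simp only [hb]; linarith [hu₀.2]
  have hb1 : b < 1 := by simp only [hb]; linarith [hu₀.2]
  have hb0 : (0:ℝ) ≤ b := by simp only [hb]; linarith [hu₀.1]
  have hsub : uIcc (0:ℝ) b ⊆ Iio 1 := uIcc_sub hb0 hb1
  have hint : IntegrableOn (fun v : ℝ => v ^ α / (1 - v)) (uIcc (0:ℝ) b) volume :=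
    ((phi_contOn hα).mono hsub).integrableOn_compact isCompact_uIcc
  have hcont := intervalIntegral.continuousOn_primitive_interval (a := 0) (b := b) hint
  have hcwa : ContinuousWithinAt (gfun α) (uIcc (0:ℝ) b) u₀ := by
    apply hcont
    rw [uIcc_of_le hb0]
    exact ⟨hu₀.1, hub.le⟩
  apply hcwa.mono_of_mem_nhdsWithin
  have hmem : Ico (0:ℝ) 1 ∩ Iio b ∈ nhdsWithin u₀ (Ico 0 1) :=
    inter_mem_nhdsWithin _ (Iio_mem_nhds hub)
  apply Filter.mem_of_superset hmem
  rintro v ⟨hv1, hv2⟩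
  rw [uIcc_of_le hb0]
  exact ⟨hv1.1, (le_of_lt hv2)⟩

lemma F_contOn (hα : 1 < α) (x : ℝ) :
    ContinuousOn (fun u : ℝ => (1 - u)⁻¹ * Real.exp (-x * gfun α u)) (Ico 0 1) := by
  apply ContinuousOn.mul
  · exact inv_contOn.mono (fun v hv => lt_of_lt_of_le hv.2 le_rfl)
  · exact (Real.continuous_exp.comp_continuousOn
      ((continuous_const.continuousOn).mul (gfun_contOn hα)))

lemma F_aesm (hα : 1 < α) (x : ℝ) :
    AEStronglyMeasurable (fun u : ℝ => (1 - u)⁻¹ * Real.exp (-x * gfun α u))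
      (volume.restrict (Ι (0:ℝ) 1)) := by
  rw [uIoc_of_le (by norm_num : (0:ℝ) ≤ 1),
    ← Measure.restrict_congr_set (Ioo_ae_eq_Ioc (a := (0:ℝ)) (b := 1))]
  exact ((F_contOn hα x).mono (fun v hv => ⟨hv.1.le, hv.2⟩)).aestronglyMeasurable
    measurableSet_Ioo

lemma F_nonneg {x u : ℝ} (hu : u ∈ Ico (0:ℝ) 1) :
    0 ≤ (1 - u)⁻¹ * Real.exp (-x * gfun α u) :=
  mul_nonneg (inv_nonneg.mpr (by linarith [hu.2])) (Real.exp_nonneg _)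

lemma rpow_eq_inv_mul_exp {x u : ℝ} (hu : u ∈ Ico (0:ℝ) 1) :
    (1 - u) ^ (x - 1) = (1 - u)⁻¹ * Real.exp (x * Real.log (1 - u)) := by
  have ht : (0:ℝ) < 1 - u := by linarith [hu.2]
  rw [Real.rpow_sub ht, Real.rpow_one, Real.rpow_def_of_pos ht,
    mul_comm (Real.log (1 - u)) x, div_eq_mul_inv, mul_comm]

lemma F_lb (hα : 1 < α) {x u : ℝ} (hx : 0 < x) (hu : u ∈ Ico (0:ℝ) 1) :
    (1 - u) ^ (x - 1) ≤ (1 - u)⁻¹ * Real.exp (-x * gfun α u) := by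
  have ht : (0:ℝ) < 1 - u := by linarith [hu.2]
  rw [rpow_eq_inv_mul_exp hu]
  apply mul_le_mul_of_nonneg_left _ (inv_nonneg.mpr ht.le)
  apply Real.exp_le_exp.mpr
  have := gfun_le hα hu.1 hu.2
  nlinarith

lemma F_ub (hα : 1 < α) {x u : ℝ} (hx : 0 < x) (hu : u ∈ Ico (0:ℝ) 1) :
    (1 - u)⁻¹ * Real.exp (-x * gfun α u) ≤ Real.exp (x * α) * (1 - u) ^ (x - 1) := by
  have ht : (0:ℝ) < 1 - u := by linarith [hu.2]
  rw [rpow_eq_inv_mul_exp hu, mul_comm (Real.exp (x * α)), mul_assoc, ← Real.exp_add]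
  apply mul_le_mul_of_nonneg_left _ (inv_nonneg.mpr ht.le)
  apply Real.exp_le_exp.mpr
  have := gfun_ge hα hu.1 hu.2
  nlinarith

lemma rpow_intble {x : ℝ} (hx : 0 < x) :
    IntervalIntegrable (fun u : ℝ => (1 - u) ^ (x - 1)) volume 0 1 := by
  have h := (intervalIntegrable_rpow' (a := 0) (b := 1)
    (by linarith : (-1:ℝ) < x - 1)).comp_sub_left 1
  simpa using h.symm

lemma rpow_integral {x : ℝ} (hx : 0 < x) :
    ∫ u in (0:ℝ)..1, (1 - u) ^ (x - 1) = x⁻¹ := by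
  rw [intervalIntegral.integral_comp_sub_left (fun t : ℝ => t ^ (x - 1)) 1]
  norm_num
  rw [integral_rpow (Or.inl (by linarith))]
  rw [sub_add_cancel, Real.one_rpow, Real.zero_rpow hx.ne']
  rw [sub_zero, one_div]

lemma F_intble (hα : 1 < α) {x : ℝ} (hx : 0 < x) :
    IntervalIntegrable (fun u : ℝ => (1 - u)⁻¹ * Real.exp (-x * gfun α u)) volume 0 1 := by
  rw [intervalIntegrable_iff]
  have hbd : IntegrableOn (fun u : ℝ => Real.exp (x * α) * (1 - u) ^ (x - 1))
      (Ι (0:ℝ) 1) volume := by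
    rw [← intervalIntegrable_iff]
    exact (rpow_intble hx).const_mul _
  apply Integrable.mono' hbd (F_aesm hα x)
  have hne : ∀ᵐ (u:ℝ) ∂volume, u ≠ 1 := by rw [ae_iff]; simpa using measure_singleton (1:ℝ)
  rw [uIoc_of_le (by norm_num : (0:ℝ) ≤ 1), ae_restrict_iff' measurableSet_Ioc]
  filter_upwards [hne] with u hne1 hu
  have hu' : u ∈ Ico (0:ℝ) 1 := ⟨hu.1.le, lt_of_le_of_ne hu.2 hne1⟩
  rw [Real.norm_eq_abs, abs_of_nonneg (F_nonneg hu')]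
  exact F_ub hα hx hu'

end helpers2


section helpers3
variable {α : ℝ}

lemma Psi_lower (hα : 1 < α) {x : ℝ} (hx : 0 < x) (hx1 : x ≠ 1) : x⁻¹ ≤ Psi α x := by
  rw [Psi, ← rpow_integral hx]
  apply intervalIntegral.integral_mono_on (by norm_num) (rpow_intble hx) (F_intble hα hx)
  intro u hu
  rcases eq_or_lt_of_le hu.2 with h | h
  · simp [h, Real.zero_rpow (sub_ne_zero.mpr hx1)]
  · exact F_lb hα hx ⟨hu.1, h⟩

lemma Psi_tendsto_zero (hα : 1 < α) : Tendsto (Psi α) (nhdsWithin 0 (Set.Ioi 0)) atTop := by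
  apply tendsto_atTop_mono' _ _ tendsto_inv_nhdsGT_zero
  filter_upwards [Ioo_mem_nhdsGT (by norm_num : (0:ℝ) < 1)] with x hx
  exact Psi_lower hα hx.1 (ne_of_lt hx.2)

lemma Psi_contOn (hα : 1 < α) : ContinuousOn (Psi α) (Ioi 0) := by
  intro x₀ hx₀
  apply ContinuousAt.continuousWithinAt
  have hx0 : (0:ℝ) < x₀ := hx₀
  have hhalf : (0:ℝ) < x₀ / 2 := by linarith
  apply intervalIntegral.continuousAt_of_dominated_interval
    (Filter.Eventually.of_forall (fun x => F_aesm hα x)) ?_ (F_intble hα hhalf) ?_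
  · filter_upwards [Ioi_mem_nhds (by linarith : x₀ / 2 < x₀)] with x hx
    apply Filter.Eventually.of_forall
    intro t ht
    rw [uIoc_of_le (by norm_num : (0:ℝ) ≤ 1)] at ht
    rcases eq_or_lt_of_le ht.2 with h | h
    · simp [h]
    · have ht' : t ∈ Ico (0:ℝ) 1 := ⟨ht.1.le, h⟩
      rw [Real.norm_eq_abs, abs_of_nonneg (F_nonneg ht')]
      apply mul_le_mul_of_nonneg_left _ (inv_nonneg.mpr (by linarith [ht'.2]))
      apply Real.exp_le_exp.mpr
      have hg := gfun_nonneg hα ht'.1 ht'.2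
      have hxx : x₀ / 2 ≤ x := le_of_lt hx
      nlinarith
  · apply Filter.Eventually.of_forall
    intro t _
    fun_prop

lemma Psi_strictAnti (hα : 1 < α) : StrictAntiOn (Psi α) (Ioi 0) := by
  intro x hx y hy hxy
  have hx' : (0:ℝ) < x := hx
  have key : 0 < Psi α x - Psi α y := by
    rw [Psi, Psi, ← intervalIntegral.integral_sub (F_intble hα hx) (F_intble hα (lt_trans hx' hxy))]
    apply intervalIntegral.intervalIntegral_pos_of_pos_on
      ((F_intble hα hx).sub (F_intble hα (lt_trans hx' hxy))) _ (by norm_num : (0:ℝ) < 1)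
    intro u hu
    have hg := gfun_pos hα hu.1 hu.2
    have h1 : (0:ℝ) < (1 - u)⁻¹ := inv_pos.mpr (by linarith [hu.2])
    have h2 : Real.exp (-y * gfun α u) < Real.exp (-x * gfun α u) :=
      Real.exp_lt_exp.mpr (by nlinarith)
    nlinarith
  linarith

lemma Psi_tendsto_atTop (hα : 1 < α) : Tendsto (Psi α) atTop (nhds 0) := by
  have key := intervalIntegral.tendsto_integral_filter_of_dominated_convergence
    (μ := volume) (a := 0) (b := 1) (l := atTop)
    (F := fun (x : ℝ) (u : ℝ) => (1 - u)⁻¹ * Real.exp (-x * gfun α u))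
    (f := fun _ => (0:ℝ))
    (bound := fun u => (1 - u)⁻¹ * Real.exp (-1 * gfun α u))
    (Filter.Eventually.of_forall (fun x => F_aesm hα x))
    ?_ (F_intble hα one_pos) ?_
  · unfold Psi
    simpa using key
  · filter_upwards [Filter.eventually_ge_atTop (1:ℝ)] with x hx
    apply Filter.Eventually.of_forall
    intro t ht
    rw [uIoc_of_le (by norm_num : (0:ℝ) ≤ 1)] at ht
    rcases eq_or_lt_of_le ht.2 with h | h
    · simp [h]
    · have ht' : t ∈ Ico (0:ℝ) 1 := ⟨ht.1.le, h⟩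
      rw [Real.norm_eq_abs, abs_of_nonneg (F_nonneg ht')]
      apply mul_le_mul_of_nonneg_left _ (inv_nonneg.mpr (by linarith [ht'.2]))
      apply Real.exp_le_exp.mpr
      have hg := gfun_nonneg hα ht'.1 ht'.2
      nlinarith
  · apply Filter.Eventually.of_forall
    intro t ht
    rw [uIoc_of_le (by norm_num : (0:ℝ) ≤ 1)] at ht
    rcases eq_or_lt_of_le ht.2 with h | h
    · simpa [h] using tendsto_const_nhds
    · have hg := gfun_pos hα ht.1 h
      have h1 : Tendsto (fun x : ℝ => -x * gfun α t) atTop atBot := by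
        simpa [neg_mul, mul_neg] using
          (tendsto_id (α := ℝ)).atTop_mul_const_of_neg (by linarith : -(gfun α t) < 0)
      have h2 : Tendsto (fun x : ℝ => Real.exp (-x * gfun α t)) atTop (nhds 0) :=
        Real.tendsto_exp_atBot.comp h1
      have h3 := h2.const_mul ((1 - t)⁻¹)
      simpa using h3

end helpers3

/-- `Ψ` is finite (its integrand is integrable), continuous and
strictly decreasing on `(0,∞)`, `Ψ(x) → ∞` as `x → 0⁺` and `Ψ(x) → 0` as
`x → ∞`; consequently, for every `β > 0` there is a unique `ρ(β) > 0` with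
`β Ψ(ρ(β) β^α) = 1`. -/
theorem Psi_properties (α : ℝ) (hα : 1 < α) :
    (∀ x : ℝ, 0 < x →
      IntervalIntegrable (fun u => (1 - u)⁻¹ * Real.exp (-x * gfun α u))
        MeasureTheory.volume 0 1) ∧
    ContinuousOn (Psi α) (Set.Ioi 0) ∧
    StrictAntiOn (Psi α) (Set.Ioi 0) ∧
    Tendsto (Psi α) (nhdsWithin 0 (Set.Ioi 0)) atTop ∧
    Tendsto (Psi α) atTop (nhds 0) ∧
    (∀ β : ℝ, 0 < β → ∃! r : ℝ, 0 < r ∧ β * Psi α (r * β ^ α) = 1) := by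
  refine ⟨fun x hx => F_intble hα hx, Psi_contOn hα, Psi_strictAnti hα,
    Psi_tendsto_zero hα, Psi_tendsto_atTop hα, ?_⟩
  intro β hβ
  have hβα : (0:ℝ) < β ^ α := Real.rpow_pos_of_pos hβ α
  have hc : (0:ℝ) < β⁻¹ := inv_pos.mpr hβ
  obtain ⟨a, ha0, haψ⟩ : ∃ a : ℝ, 0 < a ∧ β⁻¹ < Psi α a := by
    have h1 := (Psi_tendsto_zero hα).eventually_gt_atTop β⁻¹
    have h2 : ∀ᶠ x in nhdsWithin 0 (Set.Ioi 0), x ∈ Set.Ioi (0:ℝ) :=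
      eventually_mem_nhdsWithin
    obtain ⟨a, ha1, ha2⟩ := (h1.and h2).exists
    exact ⟨a, ha2, ha1⟩
  obtain ⟨b, hab, hbψ⟩ : ∃ b : ℝ, a < b ∧ Psi α b < β⁻¹ := by
    have h1 := (Psi_tendsto_atTop hα).eventually_lt_const hc
    have h2 := eventually_gt_atTop a
    obtain ⟨b, hb1, hb2⟩ := (h1.and h2).exists
    exact ⟨b, hb2, hb1⟩
  have hcont : ContinuousOn (Psi α) (Icc a b) :=
    (Psi_contOn hα).mono (fun t ht => lt_of_lt_of_le ha0 ht.1)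
  obtain ⟨y, hy, hyv⟩ := intermediate_value_Icc' hab.le hcont ⟨hbψ.le, haψ.le⟩
  have hy0 : 0 < y := lt_of_lt_of_le ha0 hy.1
  refine ⟨y / β ^ α, ⟨div_pos hy0 hβα, ?_⟩, ?_⟩
  · rw [div_mul_cancel₀ _ hβα.ne', hyv]
    exact mul_inv_cancel₀ hβ.ne'
  · rintro r ⟨hr0, hr1⟩
    have hrβ : 0 < r * β ^ α := mul_pos hr0 hβα
    have hval : Psi α (r * β ^ α) = β⁻¹ := by
      calc Psi α (r * β ^ α) = β⁻¹ * (β * Psi α (r * β ^ α)) := by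
            rw [← mul_assoc, inv_mul_cancel₀ hβ.ne', one_mul]
        _ = β⁻¹ := by rw [hr1, mul_one]
    have heq : Psi α (r * β ^ α) = Psi α y := by rw [hval, hyv]
    have hxy : r * β ^ α = y :=
      (Psi_strictAnti hα).injOn (Set.mem_Ioi.mpr hrβ) (Set.mem_Ioi.mpr hy0) heq
    rw [eq_div_iff hβα.ne']
    exact hxy
end
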